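/- arXiv:2202.12054 — 11 statements merged into one kernel-verified Lean document; each statement's English description precedes it below -/
import Mathlib

section
/- Let G be a finite abelian group and Γ ⊆ End(G) with {id, −id} ⊆ Γ. The seminormalization of the monoid ℬ_Γ(G) inside ℱ(G) equals the set of sequences S over G such that S^m ∈ ℬ_Γ(G) for some odd m ∈ ℕ. In particular, if g ∈ G has odd order then the one-element sequence g lies in the seminormalization of ℬ_Γ(G). -/
def IsWZS {G : Type*} [AddCommGroup G] (Γ : Set (G →+ G)) (S : Multiset G) : Prop :=
  ∃ T : Multiset (G × (G →+ G)),
    (∀ p ∈ T, p.2 ∈ Γ) ∧ T.map Prod.fst = S ∧ (T.map fun p => p.2 p.1).sum = 0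

def sigmaSet {G : Type*} [AddCommGroup G] (Γ : Set (G →+ G)) (S : Multiset G) : Set G :=
  {x | ∃ T : Multiset (G × (G →+ G)),
    (∀ p ∈ T, p.2 ∈ Γ) ∧ T.map Prod.fst = S ∧ (T.map fun p => p.2 p.1).sum = x}

def pmWeights (G : Type*) [AddCommGroup G] : Set (G →+ G) :=
  {AddMonoidHom.id G, -(AddMonoidHom.id G)}

def autWeights (G : Type*) [AddCommGroup G] : Set (G →+ G) :=
  {f : G →+ G | Function.Bijective ⇑f}

def IsAtomPM {G : Type*} [AddCommGroup G] (S : Multiset G) : Prop :=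
  S ≠ 0 ∧ IsWZS (pmWeights G) S ∧
    ∀ A B : Multiset G, IsWZS (pmWeights G) A → IsWZS (pmWeights G) B →
      A + B = S → A = 0 ∨ B = 0

def LSet {G : Type*} [AddCommGroup G] (B : Multiset G) : Set ℕ :=
  {ℓ | ∃ l : List (Multiset G), (∀ A ∈ l, IsAtomPM A) ∧ l.sum = B ∧ l.length = ℓ}

def BOver {G : Type*} [AddCommGroup G] (Γ : Set (G →+ G)) (G₀ : Set G) : Set (Multiset G) :=
  {S | (∀ g ∈ S, g ∈ G₀) ∧ IsWZS Γ S}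

def IsBasisTuple {G : Type*} [AddCommGroup G] {r : ℕ} (e : Fin r → G) : Prop :=
  (∀ i, e i ≠ 0) ∧
  (∀ m : Fin r → ℤ, (∑ i, m i • e i) = 0 → ∀ i, m i • e i = 0) ∧
  AddSubgroup.closure (Set.range e) = ⊤

section Aux
variable {G : Type*} [AddCommGroup G] {Γ : Set (G →+ G)}

lemma wzs_zero : IsWZS Γ (0 : Multiset G) := ⟨0, by simp⟩

lemma wzs_add {A B : Multiset G} (hA : IsWZS Γ A) (hB : IsWZS Γ B) : IsWZS Γ (A + B) := by
  obtain ⟨T, hT, hf, hs⟩ := hA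
  obtain ⟨U, hU, hg, ht⟩ := hB
  exact ⟨T + U, by
    constructor
    · intro p hp; rcases Multiset.mem_add.mp hp with h | h
      · exact hT p h
      · exact hU p h
    · simp [hf, hg, hs, ht]⟩

lemma wzs_nsmul {S : Multiset G} (h : IsWZS Γ S) (n : ℕ) : IsWZS Γ (n • S) := by
  induction n with
  | zero => simpa using (wzs_zero : IsWZS Γ 0)
  | succ k ih => rw [succ_nsmul]; exact wzs_add ih h

lemma wzs_double (h1 : AddMonoidHom.id G ∈ Γ) (h2 : -(AddMonoidHom.id G) ∈ Γ)
    (S : Multiset G) : IsWZS Γ (S + S) := by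
  refine ⟨S.map (fun g => (g, AddMonoidHom.id G)) + S.map (fun g => (g, -(AddMonoidHom.id G))), ?_, ?_, ?_⟩
  · intro p hp
    rcases Multiset.mem_add.mp hp with h | h <;>
      obtain ⟨g, _, rfl⟩ := Multiset.mem_map.mp h
    · exact h1
    · exact h2
  · simp [Multiset.map_map]
  · simp [Multiset.map_map, Function.comp_def, Multiset.sum_map_neg']

lemma wzs_even (h1 : AddMonoidHom.id G ∈ Γ) (h2 : -(AddMonoidHom.id G) ∈ Γ)
    {n : ℕ} (hn : Even n) (S : Multiset G) : IsWZS Γ (n • S) := by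
  obtain ⟨c, rfl⟩ := hn
  have : (c + c) • S = c • (S + S) := by rw [add_nsmul, smul_add]
  rw [this]
  exact wzs_nsmul (wzs_double h1 h2 S) c

lemma wzs_all_ge (h1 : AddMonoidHom.id G ∈ Γ) (h2 : -(AddMonoidHom.id G) ∈ Γ)
    {S : Multiset G} {m : ℕ} (hm : Odd m) (h : IsWZS Γ (m • S)) :
    ∀ n ≥ m, IsWZS Γ (n • S) := by
  intro n hn
  rcases Nat.even_or_odd n with he | ho
  · exact wzs_even h1 h2 he S
  · have hk : Even (n - m) := by
      rcases hm with ⟨a, ha⟩; rcases ho with ⟨b, hb⟩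
      refine ⟨b - a, by omega⟩
    have : n • S = m • S + (n - m) • S := by rw [← add_nsmul]; congr 1; omega
    rw [this]
    exact wzs_add h (wzs_even h1 h2 hk S)

end Aux

theorem stmt3 {G : Type*} [AddCommGroup G] [Fintype G] (Γ : Set (G →+ G))
    (h1 : AddMonoidHom.id G ∈ Γ) (h2 : -(AddMonoidHom.id G) ∈ Γ) :
    ({S : Multiset G | ∃ N : ℕ, ∀ n ≥ N, IsWZS Γ (n • S)}
      = {S : Multiset G | ∃ m : ℕ, Odd m ∧ IsWZS Γ (m • S)})
    ∧ ∀ g : G, Odd (addOrderOf g) →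
        ∃ N : ℕ, ∀ n ≥ N, IsWZS Γ (n • ({g} : Multiset G)) := by
  constructor
  · ext S
    simp only [Set.mem_setOf_eq]
    constructor
    · rintro ⟨N, hN⟩
      exact ⟨2 * N + 1, ⟨N, by ring⟩, hN _ (by omega)⟩
    · rintro ⟨m, hm, h⟩
      exact ⟨m, wzs_all_ge h1 h2 hm h⟩
  · intro g hg
    set m := addOrderOf g with hmdef
    have hwzs : IsWZS Γ (m • ({g} : Multiset G)) := by
      refine ⟨Multiset.replicate m (g, AddMonoidHom.id G), ?_, ?_, ?_⟩
      · intro p hp; rw [Multiset.eq_of_mem_replicate hp]; exact h1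
      · simp [Multiset.map_replicate, Multiset.replicate_succ]
        rw [← Multiset.nsmul_singleton]
      · simp [Multiset.map_replicate, Multiset.sum_replicate]
        rw [hmdef]; exact addOrderOf_nsmul_eq_zero g
    exact ⟨m, wzs_all_ge h1 h2 hg hwzs⟩
end

section
/- Let G be a finite abelian group with {id, −id} ⊆ Γ ⊆ Aut(G). If there exists g ∈ G of odd order n ≥ 3 with both g and −g considered, then the monoid ℬ_Γ(G) is not weakly Krull: the element g belongs to the intersection of all localizations of ℬ_Γ(G) at minimal prime s-ideals but not to ℬ_Γ(G). -/
lemma wzs_even_s4 {G : Type*} [AddCommGroup G] (Γ : Set (G →+ G))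
    (h1 : AddMonoidHom.id G ∈ Γ) (h2 : -(AddMonoidHom.id G) ∈ Γ)
    (a : G) (m : ℕ) : IsWZS Γ (Multiset.replicate (2 * m) a) := by
  refine ⟨Multiset.replicate m (a, AddMonoidHom.id G) +
      Multiset.replicate m (a, -(AddMonoidHom.id G)), ?_, ?_, ?_⟩
  · intro p hp
    rcases Multiset.mem_add.mp hp with hp | hp <;>
      rw [Multiset.eq_of_mem_replicate hp] <;> assumption
  · simp [Multiset.map_replicate, ← Multiset.replicate_add, two_mul]
  · simp [Multiset.map_replicate, Multiset.sum_replicate]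

theorem stmt4 {G : Type*} [AddCommGroup G] [Fintype G] [DecidableEq G] (Γ : Set (G →+ G))
    (h1 : AddMonoidHom.id G ∈ Γ) (h2 : -(AddMonoidHom.id G) ∈ Γ)
    (hAut : ∀ γ ∈ Γ, Function.Bijective ⇑γ)
    (g : G) (hodd : Odd (addOrderOf g)) (h3 : 3 ≤ addOrderOf g) :
    ¬ IsWZS Γ ({g} : Multiset G) ∧
      ∀ h : G, ∃ A B : Multiset G, IsWZS Γ A ∧ IsWZS Γ B ∧ B.count h = 0 ∧
        ({g} : Multiset G) + B = A := by
  have hg0 : g ≠ 0 := by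
    intro h
    rw [h, addOrderOf_zero] at h3
    omega
  set n := addOrderOf g with hn
  obtain ⟨m, hm⟩ := hodd
  have hng : n • g = 0 := addOrderOf_nsmul_eq_zero g
  constructor
  · rintro ⟨T, hΓ, hfst, hsum⟩
    obtain ⟨p, hT, hp⟩ := Multiset.map_eq_singleton.mp hfst
    subst hT
    simp only [Multiset.map_singleton, Multiset.sum_singleton] at hsum
    have hinj := (hAut p.2 (hΓ p (Multiset.mem_singleton_self p))).1
    have : p.1 = 0 := hinj (by simpa using hsum)
    exact hg0 (hp ▸ this)
  · intro h
    by_cases hcase : h = g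
    · -- use -g copies
      have hne : g ≠ -g := by
        intro he
        have : (2 : ℕ) • g = 0 := by
          rw [two_nsmul]
          nth_rewrite 2 [he]
          simp
        have := addOrderOf_dvd_of_nsmul_eq_zero this
        rw [← hn] at this
        have := Nat.le_of_dvd (by norm_num) this
        omega
      refine ⟨{g} + Multiset.replicate (n - 1) (-g), Multiset.replicate (n - 1) (-g),
        ?_, ?_, ?_, rfl⟩
      · refine ⟨(g, AddMonoidHom.id G) ::ₘ Multiset.replicate (n - 1) (-g, -(AddMonoidHom.id G)),
          ?_, ?_, ?_⟩
        · intro p hp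
          rcases Multiset.mem_cons.mp hp with hp | hp
          · rw [hp]; exact h1
          · rw [Multiset.eq_of_mem_replicate hp]; exact h2
        · simp [Multiset.map_replicate, Multiset.singleton_add]
        · simp only [Multiset.map_cons, Multiset.map_replicate, Multiset.sum_cons,
            Multiset.sum_replicate]
          simp only [AddMonoidHom.id_apply, AddMonoidHom.neg_apply, neg_neg]
          rw [← succ_nsmul']
          have : (n - 1) + 1 = n := by omega
          rw [this, hng]
      · have : n - 1 = 2 * m := by omega
        rw [this]
        exact wzs_even_s4 Γ h1 h2 (-g) m
      · rw [Multiset.count_replicate]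
        simp [hcase]
        exact fun he => absurd he.symm hne
    · refine ⟨Multiset.replicate n g, Multiset.replicate (n - 1) g, ?_, ?_, ?_, ?_⟩
      · refine ⟨Multiset.replicate n (g, AddMonoidHom.id G), ?_, ?_, ?_⟩
        · intro p hp; rw [Multiset.eq_of_mem_replicate hp]; exact h1
        · simp [Multiset.map_replicate]
        · simp [Multiset.map_replicate, Multiset.sum_replicate, hng]
      · have : n - 1 = 2 * m := by omega
        rw [this]
        exact wzs_even_s4 Γ h1 h2 g m
      · rw [Multiset.count_replicate]
        rw [if_neg (fun he => hcase he.symm)]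
      · rw [Multiset.singleton_add, ← Multiset.replicate_succ]
        congr 1
        omega
end

section
/- Let G be a finite abelian group. The divisor-closed submonoids of ℬ_Γ(G₀), for nonempty G₀ ⊆ G and nonempty Γ ⊆ End(G), are exactly the monoids ℬ_Γ(G₁) for subsets G₁ ⊆ G₀. -/
lemma isWZS_zero {G : Type*} [AddCommGroup G] (Γ : Set (G →+ G)) :
    IsWZS Γ (0 : Multiset G) :=
  ⟨0, by simp, by simp, by simp⟩

lemma isWZS_add {G : Type*} [AddCommGroup G] {Γ : Set (G →+ G)} {A B : Multiset G}
    (hA : IsWZS Γ A) (hB : IsWZS Γ B) : IsWZS Γ (A + B) := by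
  obtain ⟨T, hT1, hT2, hT3⟩ := hA
  obtain ⟨U, hU1, hU2, hU3⟩ := hB
  refine ⟨T + U, ?_, by simp [hT2, hU2], by simp [hT3, hU3]⟩
  intro p hp
  rcases Multiset.mem_add.mp hp with h | h
  · exact hT1 p h
  · exact hU1 p h

lemma mem_msum {α : Type*} {a : α} {s : Multiset (Multiset α)} :
    a ∈ s.sum ↔ ∃ t ∈ s, a ∈ t := by
  induction s using Multiset.induction with
  | empty => simp
  | cons b s ih =>
    simp only [Multiset.sum_cons, Multiset.mem_add, ih, Multiset.mem_cons]
    constructor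
    · rintro (h | ⟨t, ht, hat⟩)
      · exact ⟨b, Or.inl rfl, h⟩
      · exact ⟨t, Or.inr ht, hat⟩
    · rintro ⟨t, h | ht, hat⟩
      · exact Or.inl (h ▸ hat)
      · exact Or.inr ⟨t, ht, hat⟩

lemma map_msum {ι α β : Type*} (s : Multiset ι) (F : ι → Multiset α) (f : α → β) :
    ((s.map F).sum).map f = (s.map fun i => (F i).map f).sum := by
  induction s using Multiset.induction with
  | empty => simp
  | cons b s ih => simp [ih]

lemma sum_msum {ι α : Type*} [AddCommMonoid α] (s : Multiset ι) (F : ι → Multiset α) :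
    ((s.map F).sum).sum = (s.map fun i => (F i).sum).sum := by
  induction s using Multiset.induction with
  | empty => simp
  | cons b s ih => simp [ih]

lemma sum_map_add' {ι α : Type*} [AddCommMonoid α] (s : Multiset ι) (f g : ι → α) :
    (s.map fun x => f x + g x).sum = (s.map f).sum + (s.map g).sum := by
  induction s using Multiset.induction with
  | empty => simp
  | cons a s ih =>
    simp only [Multiset.map_cons, Multiset.sum_cons, ih]
    abel

lemma sum_map_nsmul' {ι α : Type*} [AddCommMonoid α] (s : Multiset ι) (n : ℕ) (f : ι → α) :
    (s.map fun x => n • f x).sum = n • (s.map f).sum := by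
  induction s using Multiset.induction with
  | empty => simp
  | cons a s ih => simp [ih]

lemma sum_mem_of_forall_mem {G : Type*} [AddCommGroup G] {H : Set (Multiset G)}
    (h0 : 0 ∈ H) (hadd : ∀ a ∈ H, ∀ b ∈ H, a + b ∈ H)
    (M : Multiset (Multiset G)) (hM : ∀ x ∈ M, x ∈ H) : M.sum ∈ H := by
  induction M using Multiset.induction with
  | empty => simpa using h0
  | cons a s ih =>
    rw [Multiset.sum_cons]
    exact hadd _ (hM a (Multiset.mem_cons_self a s)) _
      (ih fun x hx => hM x (Multiset.mem_cons_of_mem hx))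

lemma nsmul_mem_of_mem {G : Type*} [AddCommGroup G] {H : Set (Multiset G)}
    (h0 : 0 ∈ H) (hadd : ∀ a ∈ H, ∀ b ∈ H, a + b ∈ H)
    (n : ℕ) {b : Multiset G} (hb : b ∈ H) : n • b ∈ H := by
  induction n with
  | zero => simpa using h0
  | succ n ih => rw [succ_nsmul]; exact hadd _ ih _ hb

theorem stmt5 {G : Type*} [AddCommGroup G] [Fintype G]
    (Γ : Set (G →+ G)) (hΓ : Γ.Nonempty) (G₀ : Set G) (hG₀ : G₀.Nonempty)
    (H : Set (Multiset G)) :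
    (H ⊆ BOver Γ G₀ ∧ 0 ∈ H ∧ (∀ a ∈ H, ∀ b ∈ H, a + b ∈ H) ∧
      (∀ a ∈ BOver Γ G₀, ∀ b ∈ H, (∃ c ∈ BOver Γ G₀, a + c = b) → a ∈ H))
    ↔ ∃ G₁ ⊆ G₀, H = BOver Γ G₁ := by
  classical
  constructor
  · rintro ⟨hsub, h0, hadd, hdvd⟩
    set G₁ : Set G := {g | ∃ S ∈ H, g ∈ S} with hG₁def
    have hG₁sub : G₁ ⊆ G₀ := by
      rintro g ⟨S, hSH, hgS⟩
      exact (hsub hSH).1 g hgS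
    refine ⟨G₁, hG₁sub, ?_⟩
    ext S
    constructor
    · intro hS
      exact ⟨fun g hg => ⟨S, hS, hg⟩, (hsub hS).2⟩
    · rintro ⟨hS1, T, hT1, hT2, hT3⟩
      have hex : ∀ g : G, ∃ (Bg : Multiset G) (Wg : Multiset (G × (G →+ G)))
          (qg : G × (G →+ G)),
          g ∈ G₁ → Bg ∈ H ∧ (∀ r ∈ Wg, r.2 ∈ Γ) ∧ Wg.map Prod.fst = Bg ∧
            (Wg.map fun r => r.2 r.1).sum = 0 ∧ qg ∈ Wg ∧ qg.1 = g := by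
        intro g
        by_cases hg : g ∈ G₁
        · obtain ⟨Bg, hBH, hgB⟩ := hg
          obtain ⟨Wg, hW1, hW2, hW3⟩ := (hsub hBH).2
          have hmem : g ∈ Wg.map Prod.fst := hW2 ▸ hgB
          obtain ⟨qg, hq1, hq2⟩ := Multiset.mem_map.mp hmem
          exact ⟨Bg, Wg, qg, fun _ => ⟨hBH, hW1, hW2, hW3, hq1, hq2⟩⟩
        · exact ⟨0, 0, (0, 0), fun h => absurd h hg⟩
      choose B W q hprop using hex
      obtain ⟨M, hM⟩ : ∃ M : ℕ, Fintype.card G = M + 1 :=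
        ⟨Fintype.card G - 1, (Nat.succ_pred_eq_of_pos Fintype.card_pos).symm⟩
      have hNz : ∀ x : G, (M + 1) • x = 0 := fun x => by
        rw [← hM]; exact card_nsmul_eq_zero
      set V : G → Multiset (G × (G →+ G)) := fun g => (W g).erase (q g) with hV
      have hmemT : ∀ p ∈ T, p.1 ∈ G₁ := by
        intro p hp
        exact hS1 p.1 (hT2 ▸ Multiset.mem_map_of_mem Prod.fst hp)
      have hWcons : ∀ g, g ∈ G₁ → W g = q g ::ₘ V g := by
        intro g hg
        exact (Multiset.cons_erase (hprop g hg).2.2.2.2.1).symm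
      have hBcons : ∀ g, g ∈ G₁ → B g = g ::ₘ (V g).map Prod.fst := by
        intro g hg
        have h1 := (hprop g hg).2.2.1
        rw [hWcons g hg, Multiset.map_cons, (hprop g hg).2.2.2.2.2] at h1
        exact h1.symm
      set F : G × (G →+ G) → Multiset (G × (G →+ G)) :=
        fun p => V p.1 + M • ((p.1, p.2) ::ₘ V p.1) with hF
      set U : Multiset (G × (G →+ G)) := (T.map F).sum with hU
      set b : Multiset G := (T.map fun p => B p.1).sum with hb
      set c : Multiset G := U.map Prod.fst with hc
      -- membership facts about U
      have hUmem : ∀ r ∈ U, r.2 ∈ Γ ∧ r.1 ∈ G₀ := by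
        intro r hr
        rw [hU] at hr
        obtain ⟨t, ht, hrt⟩ := mem_msum.mp hr
        obtain ⟨p, hpT, rfl⟩ := Multiset.mem_map.mp ht
        have hpG₁ := hmemT p hpT
        have hmain : r ∈ V p.1 ∨ r = (p.1, p.2) := by
          rw [hF] at hrt
          rcases Multiset.mem_add.mp hrt with h | h
          · exact Or.inl h
          · rcases Multiset.mem_cons.mp (Multiset.mem_nsmul.mp h).2 with h' | h'
            · exact Or.inr h'
            · exact Or.inl h'
        rcases hmain with h | h
        · have hrW : r ∈ W p.1 := Multiset.mem_of_mem_erase h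
          have hrΓ := (hprop p.1 hpG₁).2.1 r hrW
          have hr1 : r.1 ∈ B p.1 := by
            rw [← (hprop p.1 hpG₁).2.2.1]
            exact Multiset.mem_map_of_mem Prod.fst hrW
          exact ⟨hrΓ, (hsub (hprop p.1 hpG₁).1).1 r.1 hr1⟩
        · subst h
          exact ⟨hT1 p hpT, hG₁sub hpG₁⟩
      -- S + c = (M+1) • b
      have hkey : S + c = (M + 1) • b := by
        have hS' : S = (T.map fun p => ({p.1} : Multiset G)).sum := by
          rw [← hT2]
          have h1 : (T.map fun p => ({p.1} : Multiset G))
              = (T.map Prod.fst).map fun a => ({a} : Multiset G) := by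
            rw [Multiset.map_map]; rfl
          rw [h1, Multiset.sum_map_singleton]
        have hc' : c = (T.map fun p => (F p).map Prod.fst).sum := by
          rw [hc, hU, map_msum]
        rw [hS', hc', ← sum_map_add']
        have heq : (T.map fun p => ({p.1} : Multiset G) + (F p).map Prod.fst)
            = T.map fun p => (M + 1) • B p.1 := by
          apply Multiset.map_congr rfl
          intro p hp
          have hg := hmemT p hp
          have hBe := hBcons p.1 hg
          rw [hF]
          simp only [Multiset.map_add, Multiset.map_nsmul, Multiset.map_cons]
          rw [← add_assoc, Multiset.singleton_add, ← hBe, succ_nsmul']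
        rw [heq, sum_map_nsmul', ← hb]
      -- c ∈ BOver Γ G₀
      have hcB : c ∈ BOver Γ G₀ := by
        constructor
        · intro g hg
          rw [hc] at hg
          obtain ⟨r, hr, rfl⟩ := Multiset.mem_map.mp hg
          exact (hUmem r hr).2
        · refine ⟨U, fun r hr => (hUmem r hr).1, rfl, ?_⟩
          rw [hU, map_msum, sum_msum]
          have heq : (T.map fun p => ((F p).map fun r => r.2 r.1).sum)
              = T.map fun p => M • p.2 p.1 := by
            apply Multiset.map_congr rfl
            intro p hp
            rw [hF]
            simp only [Multiset.map_add, Multiset.map_nsmul, Multiset.map_cons,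
              Multiset.sum_add, Multiset.sum_nsmul, Multiset.sum_cons]
            have hzv : (M + 1) • ((V p.1).map fun r => r.2 r.1).sum = 0 :=
              hNz _
            calc ((V p.1).map fun r => r.2 r.1).sum
                  + M • (p.2 p.1 + ((V p.1).map fun r => r.2 r.1).sum)
                = M • p.2 p.1 + (M + 1) • ((V p.1).map fun r => r.2 r.1).sum := by
                  rw [nsmul_add, succ_nsmul]; abel
              _ = M • p.2 p.1 := by rw [hzv, add_zero]
          rw [heq, sum_map_nsmul', hT3, smul_zero]
      -- (M+1) • b ∈ H
      have hbH : b ∈ H := by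
        apply sum_mem_of_forall_mem h0 hadd
        intro x hx
        obtain ⟨p, hp, rfl⟩ := Multiset.mem_map.mp hx
        exact (hprop p.1 (hmemT p hp)).1
      have hNbH : (M + 1) • b ∈ H := nsmul_mem_of_mem h0 hadd (M + 1) hbH
      exact hdvd S ⟨fun g hg => hG₁sub (hS1 g hg), T, hT1, hT2, hT3⟩ ((M + 1) • b) hNbH
        ⟨c, hcB, hkey⟩
  · rintro ⟨G₁, hG₁, rfl⟩
    refine ⟨?_, ?_, ?_, ?_⟩
    · rintro S ⟨h1, h2⟩
      exact ⟨fun g hg => hG₁ (h1 g hg), h2⟩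
    · exact ⟨fun g hg => absurd hg (Multiset.notMem_zero g), isWZS_zero Γ⟩
    · rintro a ⟨ha1, ha2⟩ b ⟨hb1, hb2⟩
      refine ⟨fun g hg => ?_, isWZS_add ha2 hb2⟩
      rcases Multiset.mem_add.mp hg with h | h
      · exact ha1 g h
      · exact hb1 g h
    · rintro a ⟨ha1, ha2⟩ b ⟨hb1, hb2⟩ ⟨c, _, rfl⟩
      exact ⟨fun g hg => hb1 g (Multiset.mem_add.mpr (Or.inl hg)), ha2⟩
end

section
/- Let G be a finite abelian group whose exponent is not a power of 2, and {id,−id} ⊆ Γ ⊆ Aut(G). Then the monoid ℬ_Γ(G) of Γ-weighted zero-sum sequences over G is not seminormal. -/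
lemma wzs_rep {G : Type*} [AddCommGroup G] (Γ : Set (G →+ G))
    (h1 : AddMonoidHom.id G ∈ Γ) (h2 : -(AddMonoidHom.id G) ∈ Γ)
    (g : G) (a b : ℕ) (h : a • g + b • (-g) = 0) :
    IsWZS Γ (Multiset.replicate (a + b) g) := by
  refine ⟨Multiset.replicate a (g, AddMonoidHom.id G)
      + Multiset.replicate b (g, -(AddMonoidHom.id G)), ?_, ?_, ?_⟩
  · intro p hp
    rcases Multiset.mem_add.1 hp with hp | hp <;>
      rw [Multiset.eq_of_mem_replicate hp] <;> assumption
  · simp [Multiset.map_replicate, ← Multiset.replicate_add]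
  · simp [Multiset.map_replicate, Multiset.sum_replicate]
    simpa using h

theorem stmt7 {G : Type*} [AddCommGroup G] [Fintype G] (Γ : Set (G →+ G))
    (h1 : AddMonoidHom.id G ∈ Γ) (h2 : -(AddMonoidHom.id G) ∈ Γ)
    (hAut : ∀ γ ∈ Γ, Function.Bijective ⇑γ)
    (hexp : ¬ ∃ k : ℕ, AddMonoid.exponent G = 2 ^ k) :
    ¬ ∀ S : Multiset G, (∃ N : ℕ, ∀ n ≥ N, IsWZS Γ (n • S)) → IsWZS Γ S := by
  -- find odd prime p dividing the exponent, hence the card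
  obtain ⟨p, hp, hdvd, hodd⟩ :=
    (AddMonoid.exponent G).eq_two_pow_or_exists_odd_prime_and_dvd.resolve_left hexp
  haveI : Fact p.Prime := ⟨hp⟩
  have hpcard : p ∣ Fintype.card G := hdvd.trans AddGroup.exponent_dvd_card
  obtain ⟨g, hg⟩ := exists_prime_addOrderOf_dvd_card p hpcard
  have hgne : g ≠ 0 := by
    intro h
    rw [h, addOrderOf_zero] at hg
    exact hp.one_lt.ne' hg.symm
  intro H
  have key : IsWZS Γ ({g} : Multiset G) := by
    apply H
    refine ⟨p, fun n hn => ?_⟩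
    rw [Multiset.nsmul_singleton]
    rcases Nat.even_or_odd n with he | ho
    · obtain ⟨k, hk⟩ := he
      have : n = k + k := by omega
      rw [this]
      exact wzs_rep Γ h1 h2 g k k (by simp)
    · -- n odd, n ≥ p, p odd: n = (b + p) + b
      obtain ⟨b, hb⟩ : ∃ b, n = (b + p) + b := by
        obtain ⟨m, hm⟩ := ho
        obtain ⟨m', hm'⟩ := hodd
        refine ⟨(n - p) / 2, by omega⟩
      rw [hb]
      apply wzs_rep Γ h1 h2 g
      have hpg : p • g = 0 := by rw [← hg]; exact addOrderOf_nsmul_eq_zero g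
      rw [add_nsmul, hpg, smul_neg]
      abel
  obtain ⟨T, hmem, hfst, hsum⟩ := key
  obtain ⟨q, hq, hqg⟩ := Multiset.map_eq_singleton.1 hfst
  rw [hq] at hsum hmem
  simp only [Multiset.map_singleton, Multiset.sum_singleton] at hsum
  have hinj := (hAut q.2 (hmem q (Multiset.mem_singleton_self q))).injective
  apply hgne
  rw [← hqg]
  have : q.2 q.1 = q.2 0 := by rw [hsum, map_zero]
  exact hinj this
end

section
/- Let G be a finite abelian group. The plus-minus weighted zero-sum monoid ℬ_±(G) is seminormal if and only if exp(G) divides 4. -/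
section aux
variable {G : Type*} [AddCommGroup G]

lemma wzs_iff (S : Multiset G) :
    IsWZS (pmWeights G) S ↔ ∃ A B : Multiset G, A + B = S ∧ A.sum = B.sum := by
  constructor
  · rintro ⟨T, hT, rfl, hsum⟩
    suffices h : ∀ T : Multiset (G × (G →+ G)), (∀ p ∈ T, p.2 ∈ pmWeights G) →
        ∃ A B : Multiset G, A + B = T.map Prod.fst ∧
          A.sum - B.sum = (T.map fun p => p.2 p.1).sum by
      obtain ⟨A, B, h1, h2⟩ := h T hT
      exact ⟨A, B, h1, by rwa [hsum, sub_eq_zero] at h2⟩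
    clear hT hsum
    intro T
    induction T using Multiset.induction_on with
    | empty => exact fun _ => ⟨0, 0, by simp, by simp⟩
    | cons p T ih =>
      intro hT
      obtain ⟨A, B, h1, h2⟩ := ih (fun q hq => hT q (Multiset.mem_cons_of_mem hq))
      have hp := hT p (Multiset.mem_cons_self p T)
      rcases hp with hp | hp
      · refine ⟨p.1 ::ₘ A, B, ?_, ?_⟩
        · rw [Multiset.cons_add, h1, Multiset.map_cons]
        · rw [Multiset.map_cons, Multiset.sum_cons, Multiset.sum_cons, ← h2, hp]
          simp; abel
      · refine ⟨A, p.1 ::ₘ B, ?_, ?_⟩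
        · rw [Multiset.add_cons, h1, Multiset.map_cons]
        · rw [Multiset.map_cons, Multiset.sum_cons, Multiset.sum_cons, ← h2, hp]
          simp; abel
  · rintro ⟨A, B, rfl, hAB⟩
    refine ⟨A.map (fun g => (g, AddMonoidHom.id G)) + B.map (fun g => (g, -AddMonoidHom.id G)),
      ?_, ?_, ?_⟩
    · intro p hp
      rw [Multiset.mem_add] at hp
      rcases hp with hp | hp <;> rw [Multiset.mem_map] at hp <;>
        obtain ⟨g, _, rfl⟩ := hp
      · exact Or.inl rfl
      · exact Or.inr rfl
    · simp [Multiset.map_map, Function.comp]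
    · rw [Multiset.map_add, Multiset.sum_add, Multiset.map_map, Multiset.map_map]
      simp only [Function.comp, Function.comp_def, AddMonoidHom.id_apply, AddMonoidHom.neg_apply,
        Multiset.map_id']
      rw [Multiset.sum_map_neg', hAB]
      simp

variable [DecidableEq G]

lemma sum_finset_sum {β : Type*} (t : Finset β) (f : β → Multiset G) :
    (∑ b ∈ t, f b).sum = ∑ b ∈ t, (f b).sum :=
  map_sum Multiset.sumAddMonoidHom f t

lemma sum_count_smul (A : Multiset G) (t : Finset G) (h : ∀ g ∈ A, g ∈ t) :
    A.sum = ∑ g ∈ t, A.count g • g := by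
  have hsub : A.toFinset ⊆ t := fun x hx => h x (Multiset.mem_toFinset.mp hx)
  have hzero : ∀ x ∈ t, x ∉ A.toFinset → A.count x • ({x} : Multiset G) = 0 := by
    intro x _ hx
    rw [Multiset.count_eq_zero_of_notMem (fun hm => hx (Multiset.mem_toFinset.mpr hm))]
    simp
  have h1 : ∑ g ∈ t, A.count g • ({g} : Multiset G) = A :=
    (Finset.sum_subset hsub hzero).symm.trans (Multiset.toFinset_sum_count_nsmul_eq A)
  conv_lhs => rw [← h1]
  rw [sum_finset_sum]
  refine Finset.sum_congr rfl fun g _ => ?_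
  rw [Multiset.nsmul_singleton, Multiset.sum_replicate]

end aux

section key
variable {G : Type*} [AddCommGroup G] [DecidableEq G]

lemma per_elem (h4 : ∀ x : G, (4 : ℕ) • x = 0) (g : G) (m : ℕ) (k : ℤ)
    (hm : 0 < m) (hpar : (2 : ℤ) ∣ k - m) :
    ∃ a b : ℕ, a + b = m ∧ ((a : ℤ) - (b : ℤ)) • g = k • g := by
  have h40 : (4 : ℤ) • g = 0 := by
    rw [show ((4 : ℤ)) = ((4 : ℕ) : ℤ) by norm_num, natCast_zsmul]
    exact h4 g
  have h4' : ∀ q : ℤ, (4 * q) • g = 0 := fun q => by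
    rw [mul_comm, mul_zsmul, h40, smul_zero]
  have hex : ∃ a b : ℕ, a + b = m ∧ (4 : ℤ) ∣ k - ((a : ℤ) - b) := by
    refine ⟨if k % 4 = 0 then m / 2 else if k % 4 = 1 then m / 2 + 1
        else if k % 4 = 2 then m / 2 + 1 else m / 2,
      if k % 4 = 0 then m / 2 else if k % 4 = 1 then m / 2
        else if k % 4 = 2 then m / 2 - 1 else m / 2 + 1, ?_, ?_⟩ <;>
      split_ifs <;> omega
  obtain ⟨a, b, hab, q, hq⟩ := hex
  have hk : k = ((a : ℤ) - b) + 4 * q := by linarith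
  exact ⟨a, b, hab, by rw [hk, add_zsmul, h4' q, add_zero]⟩

lemma key_lemma (h4 : ∀ x : G, (4 : ℕ) • x = 0) (S : Multiset G) (n : ℕ) (hn : n % 2 = 1)
    (h : ∃ A B : Multiset G, A + B = n • S ∧ A.sum = B.sum) :
    ∃ A' B' : Multiset G, A' + B' = S ∧ A'.sum = B'.sum := by
  obtain ⟨A, B, hAB, hsum⟩ := h
  set t := S.toFinset with ht
  have hmemA : ∀ g ∈ A, g ∈ t := fun g hg => Multiset.mem_toFinset.mpr
    (Multiset.mem_of_mem_nsmul (hAB ▸ Multiset.mem_add.mpr (Or.inl hg) : g ∈ n • S))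
  have hmemB : ∀ g ∈ B, g ∈ t := fun g hg => Multiset.mem_toFinset.mpr
    (Multiset.mem_of_mem_nsmul (hAB ▸ Multiset.mem_add.mpr (Or.inr hg) : g ∈ n • S))
  have hcount : ∀ g, A.count g + B.count g = n * S.count g := by
    intro g
    have := congrArg (Multiset.count g) hAB
    simpa [Multiset.count_add, Multiset.count_nsmul] using this
  set k : G → ℤ := fun g => (A.count g : ℤ) - B.count g with hk
  have hchoice : ∀ g : G, ∃ a b : ℕ,
      g ∈ t → (a + b = S.count g ∧ ((a : ℤ) - b) • g = k g • g) := by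
    intro g
    by_cases hg : g ∈ t
    · have hm : 0 < S.count g := Multiset.count_pos.mpr (Multiset.mem_toFinset.mp hg)
      obtain ⟨P, hP1, hP2⟩ : ∃ P, A.count g + B.count g = P ∧ P % 2 = S.count g % 2 :=
        ⟨n * S.count g, hcount g, by rw [Nat.mul_mod, hn]; omega⟩
      have hpar : (2 : ℤ) ∣ k g - S.count g := by simp only [hk]; omega
      obtain ⟨a, b, hab, hsm⟩ := per_elem h4 g (S.count g) (k g) hm hpar
      exact ⟨a, b, fun _ => ⟨hab, hsm⟩⟩
    · exact ⟨0, 0, fun h => absurd h hg⟩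
  choose a' b' hab using hchoice
  refine ⟨∑ g ∈ t, a' g • ({g} : Multiset G), ∑ g ∈ t, b' g • ({g} : Multiset G), ?_, ?_⟩
  · rw [← Finset.sum_add_distrib]
    rw [show S = ∑ g ∈ t, S.count g • ({g} : Multiset G) from
      (Multiset.toFinset_sum_count_nsmul_eq S).symm]
    refine Finset.sum_congr rfl fun g hg => ?_
    rw [← add_nsmul, (hab g hg).1]
  · have hsum' : ∀ (C : Multiset G) (c' : G → ℕ),
        (∑ g ∈ t, c' g • ({g} : Multiset G)).sum = ∑ g ∈ t, (c' g : ℤ) • g := by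
      intro C c'
      rw [sum_finset_sum]
      refine Finset.sum_congr rfl fun g _ => ?_
      rw [Multiset.nsmul_singleton, Multiset.sum_replicate, natCast_zsmul]
    rw [← sub_eq_zero, hsum' A a', hsum' B b', ← Finset.sum_sub_distrib]
    have step1 : ∀ g ∈ t, (a' g : ℤ) • g - (b' g : ℤ) • g = k g • g := fun g hg => by
      rw [sub_eq_add_neg, ← neg_zsmul, ← add_zsmul, ← sub_eq_add_neg]; exact (hab g hg).2
    rw [Finset.sum_congr rfl step1]
    have hAs : A.sum = ∑ g ∈ t, (A.count g : ℤ) • g := by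
      rw [sum_count_smul A t hmemA]
      exact Finset.sum_congr rfl fun g _ => (natCast_zsmul _ _).symm
    have hBs : B.sum = ∑ g ∈ t, (B.count g : ℤ) • g := by
      rw [sum_count_smul B t hmemB]
      exact Finset.sum_congr rfl fun g _ => (natCast_zsmul _ _).symm
    have : ∑ g ∈ t, k g • g = A.sum - B.sum := by
      rw [hAs, hBs, ← Finset.sum_sub_distrib]
      exact Finset.sum_congr rfl fun g _ => by rw [hk, sub_zsmul, sub_eq_add_neg]
    rw [this, hsum, sub_self]

end key

section counter
variable {G : Type*} [AddCommGroup G] [DecidableEq G]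

lemma pos_odd (g : G) (d : ℕ) (hd : addOrderOf g = d) (hodd : d % 2 = 1) :
    ∀ n ≥ d, IsWZS (pmWeights G) (n • ({g} : Multiset G)) := by
  intro n hn
  rw [wzs_iff]
  have hd0 : d • g = 0 := hd ▸ addOrderOf_nsmul_eq_zero g
  obtain ⟨a, b, hab, hcase⟩ : ∃ a b : ℕ, a + b = n ∧ (a = b ∨ a = b + d) := by
    rcases Nat.even_or_odd n with ⟨r, hr⟩ | ⟨r, hr⟩
    · exact ⟨r, r, by omega, Or.inl rfl⟩
    · exact ⟨(n - d) / 2 + d, (n - d) / 2, by omega, Or.inr rfl⟩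
  refine ⟨Multiset.replicate a g, Multiset.replicate b g, ?_, ?_⟩
  · rw [← Multiset.replicate_add, hab, Multiset.nsmul_singleton]
  · rw [Multiset.sum_replicate, Multiset.sum_replicate]
    rcases hcase with rfl | rfl
    · rfl
    · rw [add_nsmul, hd0, add_zero]

lemma neg_odd (g : G) (d : ℕ) (hd : addOrderOf g = d) (h3 : 3 ≤ d) :
    ¬ IsWZS (pmWeights G) ({g} : Multiset G) := by
  rw [wzs_iff]
  rintro ⟨A, B, hAB, hs⟩
  have hmA : ∀ x ∈ A, x ∈ ({g} : Finset G) := fun x hx => by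
    have : x ∈ ({g} : Multiset G) := hAB ▸ Multiset.mem_add.mpr (Or.inl hx)
    simpa using this
  have hmB : ∀ x ∈ B, x ∈ ({g} : Finset G) := fun x hx => by
    have : x ∈ ({g} : Multiset G) := hAB ▸ Multiset.mem_add.mpr (Or.inr hx)
    simpa using this
  have hA : A.sum = (A.count g : ℤ) • g := by
    rw [sum_count_smul A {g} hmA, Finset.sum_singleton, natCast_zsmul]
  have hB : B.sum = (B.count g : ℤ) • g := by
    rw [sum_count_smul B {g} hmB, Finset.sum_singleton, natCast_zsmul]
  have hcard : A.count g + B.count g = 1 := by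
    have := congrArg (Multiset.count g) hAB
    simpa [Multiset.count_add] using this
  have hz : ((A.count g : ℤ) - B.count g) • g = 0 := by
    rw [sub_zsmul, ← hA, ← hB, hs]
    simp
  have hdvd : (d : ℤ) ∣ (A.count g : ℤ) - B.count g :=
    hd ▸ addOrderOf_dvd_iff_zsmul_eq_zero.mpr hz
  have h01 : A.count g = 1 ∧ B.count g = 0 ∨ A.count g = 0 ∧ B.count g = 1 := by omega
  have hle : (d : ℤ) ≤ 1 := by
    rcases h01 with ⟨h1, h2⟩ | ⟨h1, h2⟩
    · rw [h1, h2] at hdvd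
      exact Int.le_of_dvd one_pos (by simpa using hdvd)
    · rw [h1, h2] at hdvd
      refine Int.le_of_dvd one_pos ?_
      rw [← Int.dvd_neg]
      simpa using hdvd
  omega

lemma pos8 (g : G) (hd : addOrderOf g = 8) :
    ∀ n ≥ 2, IsWZS (pmWeights G) (n • (g ::ₘ g ::ₘ {(4 : ℕ) • g})) := by
  intro n hn
  rw [wzs_iff]
  have h80 : (8 : ℕ) • g = 0 := by rw [← hd]; exact addOrderOf_nsmul_eq_zero g
  have h8 : ∀ p q : ℕ, p = q + 8 → p • g = q • g := by
    intro p q hpq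
    rw [hpq, add_nsmul, h80, add_zero]
  have hsplit : g ::ₘ g ::ₘ ({(4 : ℕ) • g} : Multiset G) =
      {g} + {g} + {(4 : ℕ) • g} := by
    rw [Multiset.singleton_add, Multiset.cons_add, Multiset.singleton_add]
  rcases Nat.even_or_odd n with ⟨r, rfl⟩ | ⟨m, rfl⟩
  · exact ⟨r • (g ::ₘ g ::ₘ {(4 : ℕ) • g}), r • (g ::ₘ g ::ₘ {(4 : ℕ) • g}),
      by rw [← add_nsmul], rfl⟩
  · have hm : 1 ≤ m := by omega
    set x := (4 : ℕ) • g with hx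
    have hS : (2 * m + 1) • (g ::ₘ g ::ₘ ({x} : Multiset G)) =
        Multiset.replicate ((2 * m + 1) + (2 * m + 1)) g +
          Multiset.replicate (2 * m + 1) x := by
      rw [hsplit, smul_add, smul_add, Multiset.nsmul_singleton, Multiset.nsmul_singleton,
        ← Multiset.replicate_add]
    refine ⟨Multiset.replicate (2 * m + 3) g + Multiset.replicate (m + 1) x,
        Multiset.replicate (2 * m - 1) g + Multiset.replicate m x, ?_, ?_⟩
    · rw [hS, add_add_add_comm, ← Multiset.replicate_add, ← Multiset.replicate_add]
      congr 2 <;> omega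
    · rw [Multiset.sum_add, Multiset.sum_add, Multiset.sum_replicate, Multiset.sum_replicate,
        Multiset.sum_replicate, Multiset.sum_replicate, hx, ← mul_nsmul', ← mul_nsmul',
        ← add_nsmul, ← add_nsmul]
      exact h8 _ _ (by omega)

lemma neg8 (g : G) (hd : addOrderOf g = 8) :
    ¬ IsWZS (pmWeights G) (g ::ₘ g ::ₘ {(4 : ℕ) • g}) := by
  rw [wzs_iff]
  rintro ⟨A, B, hAB, hs⟩
  set x := (4 : ℕ) • g with hx
  have hgx : g ≠ x := by
    intro h
    have h4 : (4 : ℕ) • g = (3 : ℕ) • g + g := succ_nsmul g 3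
    have h0 : (3 : ℕ) • g + g = 0 + g := by
      rw [← h4, zero_add]; exact h.symm
    have h3 : (3 : ℕ) • g = 0 := add_right_cancel h0
    have hdvd8 := addOrderOf_dvd_of_nsmul_eq_zero h3
    rw [hd] at hdvd8
    omega
  have hmem : ∀ y ∈ (g ::ₘ g ::ₘ ({x} : Multiset G)), y ∈ ({g, x} : Finset G) := by
    intro y hy
    simp only [Multiset.mem_cons, Multiset.mem_singleton] at hy
    simp only [Finset.mem_insert, Finset.mem_singleton]
    tauto
  have hmA : ∀ y ∈ A, y ∈ ({g, x} : Finset G) :=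
    fun y hy => hmem y (hAB ▸ Multiset.mem_add.mpr (Or.inl hy))
  have hmB : ∀ y ∈ B, y ∈ ({g, x} : Finset G) :=
    fun y hy => hmem y (hAB ▸ Multiset.mem_add.mpr (Or.inr hy))
  have hcg : A.count g + B.count g = 2 := by
    have := congrArg (Multiset.count g) hAB
    simp [Multiset.count_cons, Multiset.count_singleton, hgx, Ne.symm hgx] at this
    omega
  have hcx : A.count x + B.count x = 1 := by
    have := congrArg (Multiset.count x) hAB
    simp [Multiset.count_cons, Multiset.count_singleton, hgx, Ne.symm hgx] at this
    omega
  have h4z : x = (4 : ℤ) • g := by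
    rw [hx, ← natCast_zsmul g 4]; norm_num
  have hxg : ∀ c : ℤ, c • x = (c * 4) • g := by
    intro c
    rw [h4z, mul_zsmul]
  have hsum : ∀ C : Multiset G, (∀ y ∈ C, y ∈ ({g, x} : Finset G)) →
      C.sum = ((C.count g : ℤ) + (C.count x : ℤ) * 4) • g := by
    intro C hC
    rw [sum_count_smul C {g, x} hC, Finset.sum_insert (by simpa using hgx),
      Finset.sum_singleton]
    have e1 : Multiset.count g C • g = (Multiset.count g C : ℤ) • g := (natCast_zsmul g _).symm
    have e2 : Multiset.count x C • x = (Multiset.count x C : ℤ) • x := (natCast_zsmul x _).symm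
    rw [e1, e2, hxg, ← add_zsmul]
  have hz : (((A.count g : ℤ) + A.count x * 4) - ((B.count g : ℤ) + B.count x * 4)) • g = 0 := by
    rw [sub_zsmul, ← hsum A hmA, ← hsum B hmB, hs]
    simp
  have hdvd : (8 : ℤ) ∣ ((A.count g : ℤ) + A.count x * 4) - ((B.count g : ℤ) + B.count x * 4) := by
    have := addOrderOf_dvd_iff_zsmul_eq_zero.mpr hz
    rwa [hd] at this
  omega

end counter


theorem stmt8 {G : Type*} [AddCommGroup G] [Fintype G] :
    (∀ S : Multiset G,
        (∃ N : ℕ, ∀ n ≥ N, IsWZS (pmWeights G) (n • S)) → IsWZS (pmWeights G) S)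
    ↔ AddMonoid.exponent G ∣ 4 := by
  classical
  constructor
  · intro hsemi
    rw [AddMonoid.exponent_dvd]
    by_contra hc
    push_neg at hc
    obtain ⟨g, hg⟩ := hc
    have hd0 : 0 < addOrderOf g := addOrderOf_pos g
    set d := addOrderOf g with hdd
    have hcases : (∃ h : G, ∃ p, addOrderOf h = p ∧ p % 2 = 1 ∧ 3 ≤ p) ∨
        (∃ h : G, addOrderOf h = 8) := by
      by_cases hodd : ∃ p : ℕ, p.Prime ∧ p ∣ d ∧ p ≠ 2
      · obtain ⟨p, hp, hpd, hp2⟩ := hodd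
        refine Or.inl ⟨(d / p) • g, p, ?_, ?_, ?_⟩
        · rw [addOrderOf_nsmul, ← hdd, Nat.gcd_eq_right (Nat.div_dvd_of_dvd hpd),
            Nat.div_div_self hpd (by omega)]
        · exact Nat.odd_iff.mp (hp.odd_of_ne_two hp2)
        · have := hp.two_le
          omega
      · push_neg at hodd
        have hcompl : ordCompl[2] d = 1 := by
          by_contra h1
          have hpos : 0 < ordCompl[2] d := Nat.ordCompl_pos 2 (by omega)
          obtain ⟨q, hq, hqd⟩ := Nat.exists_prime_and_dvd (fun h => h1 h)
          have hq2 : q ≠ 2 := fun h => Nat.not_dvd_ordCompl Nat.prime_two (by omega) (h ▸ hqd)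
          exact hq2 (hodd q hq (hqd.trans (Nat.ordCompl_dvd d 2)))
        have hk : d = 2 ^ (d.factorization 2) := by
          have := Nat.ordProj_mul_ordCompl_eq_self d 2
          rw [hcompl, mul_one] at this
          exact this.symm
        have hk3 : 3 ≤ d.factorization 2 := by
          by_contra h
          interval_cases h' : (d.factorization 2) <;>
            exact hg (by rw [hk]; norm_num)
        have h8d : (8 : ℕ) ∣ d := by
          rw [hk, show (8 : ℕ) = 2 ^ 3 by norm_num]
          exact pow_dvd_pow 2 hk3
        refine Or.inr ⟨(d / 8) • g, ?_⟩
        rw [addOrderOf_nsmul, ← hdd, Nat.gcd_eq_right (Nat.div_dvd_of_dvd h8d),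
          Nat.div_div_self h8d (by omega)]
    rcases hcases with ⟨h, p, hhp, hodd, h3⟩ | ⟨h, h8⟩
    · exact neg_odd h p hhp h3 (hsemi {h} ⟨p, pos_odd h p hhp hodd⟩)
    · exact neg8 h h8 (hsemi _ ⟨2, pos8 h h8⟩)
  · rintro hdvd S ⟨N, hN⟩
    have h4 : ∀ x : G, (4 : ℕ) • x = 0 :=
      AddMonoid.exponent_dvd_iff_forall_nsmul_eq_zero.mp hdvd
    rw [wzs_iff]
    refine key_lemma h4 S (2 * N + 1) (by omega) ?_
    rw [← wzs_iff]
    exact hN (2 * N + 1) (by omega)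
end

section
/- Let G ≅ C_{2^{t₁}} ⊕ … ⊕ C_{2^{t_r}} with r ∈ ℕ and t₁ < t₂ < … < t_r (all tᵢ ≥ 1), and Γ = Aut(G). Then the monoid ℬ_Γ(G) of Aut(G)-weighted zero-sum sequences over G is seminormal. Conversely, if Γ = Aut(G) and ℬ_Γ(G) is seminormal and |G| > 1, then G is a 2-group which is a direct sum of cyclic groups of pairwise distinct orders. -/
section Machinery

variable {G : Type*} [AddCommGroup G] {Γ Γ' : Set (G →+ G)}

def NSum (Γ : Set (G →+ G)) (m : ℕ) : Set (G →+ G) :=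
  {ψ | ∃ L : Multiset (G →+ G), (∀ φ ∈ L, φ ∈ Γ) ∧ Multiset.card L = m ∧ L.sum = ψ}

lemma multiset_map_split {α β : Type*} (f : α → β) :
    ∀ (A B : Multiset β) (T : Multiset α), T.map f = A + B →
      ∃ U V : Multiset α, T = U + V ∧ U.map f = A ∧ V.map f = B := by
  classical
  intro A
  induction A using Multiset.induction with
  | empty => exact fun B T h => ⟨0, T, by simp, by simp, by simpa using h⟩
  | cons a A ih =>
    intro B T h
    have ha : a ∈ T.map f := by rw [h]; simp
    obtain ⟨p, hpT, hpa⟩ := Multiset.mem_map.1 ha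
    have hT : T = p ::ₘ T.erase p := (Multiset.cons_erase hpT).symm
    have h2 : (T.erase p).map f = A + B := by
      have : f p ::ₘ (T.erase p).map f = a ::ₘ (A + B) := by
        rw [← Multiset.map_cons, ← hT, h, Multiset.cons_add]
      rw [hpa] at this
      exact Multiset.cons_inj_right a |>.1 this
    obtain ⟨U, V, hUV, hU, hV⟩ := ih B (T.erase p) h2
    exact ⟨p ::ₘ U, V, by rw [hT, hUV, Multiset.cons_add], by simp [hU, hpa], hV⟩

lemma sigma_zero {x : G} (h : x ∈ sigmaSet Γ 0) : x = 0 := by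
  obtain ⟨T, -, hT, hs⟩ := h
  have : T = 0 := by simpa using hT
  simp [this] at hs; exact hs.symm

lemma zero_mem_sigma_zero : (0 : G) ∈ sigmaSet Γ 0 := ⟨0, by simp, by simp, by simp⟩

lemma sigma_add_split {A B : Multiset G} {x : G} (h : x ∈ sigmaSet Γ (A + B)) :
    ∃ a b, a ∈ sigmaSet Γ A ∧ b ∈ sigmaSet Γ B ∧ x = a + b := by
  obtain ⟨T, hmem, hT, hs⟩ := h
  obtain ⟨U, V, rfl, hU, hV⟩ := multiset_map_split Prod.fst A B T hT
  refine ⟨(U.map fun p => p.2 p.1).sum, (V.map fun p => p.2 p.1).sum,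
    ⟨U, fun p hp => hmem p (by simp [hp]), hU, rfl⟩,
    ⟨V, fun p hp => hmem p (by simp [hp]), hV, rfl⟩, ?_⟩
  rw [← hs, Multiset.map_add, Multiset.sum_add]

lemma sigma_single {g x : G} (h : x ∈ sigmaSet Γ {g}) : ∃ τ ∈ Γ, x = τ g := by
  obtain ⟨T, hmem, hT, hs⟩ := h
  obtain ⟨p, rfl, hp1⟩ := Multiset.map_eq_singleton.1 hT
  refine ⟨p.2, hmem p (by simp), ?_⟩
  simp [hp1] at hs ⊢; exact hs.symm

lemma sigma_cons_mem {g y : G} {S : Multiset G} {τ : G →+ G} (hτ : τ ∈ Γ)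
    (hy : y ∈ sigmaSet Γ S) : τ g + y ∈ sigmaSet Γ (g ::ₘ S) := by
  obtain ⟨T, hmem, hT, hs⟩ := hy
  refine ⟨(g, τ) ::ₘ T, ?_, by simp [hT], by simp [hs]⟩
  rintro p hp
  rcases Multiset.mem_cons.1 hp with rfl | hp
  exacts [hτ, hmem p hp]

lemma sigma_cons_split {g x : G} {S : Multiset G} (h : x ∈ sigmaSet Γ (g ::ₘ S)) :
    ∃ τ ∈ Γ, ∃ y ∈ sigmaSet Γ S, x = τ g + y := by
  rw [← Multiset.singleton_add] at h
  obtain ⟨a, b, ha, hb, rfl⟩ := sigma_add_split h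
  obtain ⟨τ, hτ, rfl⟩ := sigma_single ha
  exact ⟨τ, hτ, b, hb, rfl⟩

lemma sigma_replicate {g x : G} {m : ℕ} (h : x ∈ sigmaSet Γ (Multiset.replicate m g)) :
    ∃ ψ ∈ NSum Γ m, x = ψ g := by
  induction m generalizing x with
  | zero =>
    exact ⟨0, ⟨0, by simp, by simp, by simp⟩, by simpa using sigma_zero h⟩
  | succ m ih =>
    rw [Multiset.replicate_succ] at h
    obtain ⟨τ, hτ, y, hy, rfl⟩ := sigma_cons_split h
    obtain ⟨ψ, ⟨L, hL, hcard, hsum⟩, rfl⟩ := ih hy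
    refine ⟨τ + ψ, ⟨τ ::ₘ L, ?_, by simp [hcard], by simp [hsum]⟩, by simp⟩
    rintro φ hφ
    rcases Multiset.mem_cons.1 hφ with rfl | hφ
    exacts [hτ, hL φ hφ]

lemma sigma_nsmul {S : Multiset G} {m : ℕ} {x : G} (h : x ∈ sigmaSet Γ (m • S)) :
    x ∈ sigmaSet (NSum Γ m) S := by
  induction S using Multiset.induction generalizing x with
  | empty =>
    rw [smul_zero] at h
    rw [sigma_zero h]; exact zero_mem_sigma_zero
  | cons g S ih =>
    have hrw : m • (g ::ₘ S) = Multiset.replicate m g + m • S := by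
      rw [← Multiset.singleton_add, nsmul_add, Multiset.nsmul_singleton]
    rw [hrw] at h
    obtain ⟨a, b, ha, hb, rfl⟩ := sigma_add_split h
    obtain ⟨ψ, hψ, rfl⟩ := sigma_replicate ha
    exact sigma_cons_mem hψ (ih hb)

lemma sigma_mono (hΓ : Γ ⊆ Γ') {S : Multiset G} : sigmaSet Γ S ⊆ sigmaSet Γ' S := by
  rintro x ⟨T, hmem, hT, hs⟩
  exact ⟨T, fun p hp => hΓ (hmem p hp), hT, hs⟩

lemma isWZS_iff_zero_mem {S : Multiset G} : IsWZS Γ S ↔ (0 : G) ∈ sigmaSet Γ S := Iff.rfl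

lemma isWZS_map {H : Type*} [AddCommGroup H] (e : G ≃+ H) {S : Multiset G}
    (h : IsWZS (autWeights G) S) : IsWZS (autWeights H) (S.map e) := by
  obtain ⟨T, hmem, hT, hs⟩ := h
  refine ⟨T.map fun p => (e p.1,
    (e.toAddMonoidHom.comp p.2).comp e.symm.toAddMonoidHom), ?_, ?_, ?_⟩
  · rintro q hq
    obtain ⟨p, hp, rfl⟩ := Multiset.mem_map.1 hq
    have : Function.Bijective ⇑((e.toAddMonoidHom.comp p.2).comp e.symm.toAddMonoidHom) := by
      simp only [AddMonoidHom.coe_comp, AddEquiv.coe_toAddMonoidHom]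
      exact (e.bijective.comp (hmem p hp)).comp e.symm.bijective
    exact this
  · rw [Multiset.map_map, ← hT, Multiset.map_map]; rfl
  · rw [Multiset.map_map]
    have h4 : T.map ((fun p : H × (H →+ H) => p.2 p.1) ∘ fun p : G × (G →+ G) => (e p.1,
        (e.toAddMonoidHom.comp p.2).comp e.symm.toAddMonoidHom)) =
        T.map (fun p : G × (G →+ G) => e (p.2 p.1)) :=
      Multiset.map_congr rfl (fun p _ => by simp)
    have h5 : T.map (fun p : G × (G →+ G) => e (p.2 p.1)) =
        (T.map fun p => p.2 p.1).map ⇑e := by rw [Multiset.map_map]; rfl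
    rw [h4, h5, ← AddEquiv.coe_toAddMonoidHom, ← map_multiset_sum, hs, map_zero]

end Machinery

section Key

variable {r : ℕ} {t : Fin r → ℕ}

lemma two_pow_split {k : ℕ} (hk : 1 ≤ k) : 2 ^ k = 2 ^ (k - 1) + 2 ^ (k - 1) := by
  have : k - 1 + 1 = k := by omega
  calc 2 ^ k = 2 ^ (k - 1 + 1) := by rw [this]
    _ = 2 ^ (k - 1) + 2 ^ (k - 1) := by rw [pow_succ]; ring

lemma zmod_two_torsion {k : ℕ} (hk : 1 ≤ k) {y : ZMod (2 ^ k)} (h : y + y = 0) :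
    y = 0 ∨ y = ((2 ^ (k - 1) : ℕ) : ZMod (2 ^ k)) := by
  haveI : NeZero (2 ^ k) := ⟨pow_ne_zero _ two_ne_zero⟩
  have hval : ((y.val : ℕ) : ZMod (2 ^ k)) = y := ZMod.natCast_zmod_val y
  have h2 : ((y.val + y.val : ℕ) : ZMod (2 ^ k)) = 0 := by
    push_cast
    rw [hval]; exact h
  have hdvd : 2 ^ k ∣ y.val + y.val := (ZMod.natCast_eq_zero_iff _ _).1 h2
  have hlt : y.val < 2 ^ k := ZMod.val_lt y
  obtain ⟨c, hc⟩ := hdvd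
  have hP : 0 < 2 ^ (k - 1) := Nat.pow_pos (by norm_num)
  have hsplit := two_pow_split hk
  have hdistr : 2 ^ k * c = 2 ^ (k - 1) * c + 2 ^ (k - 1) * c := by rw [hsplit]; ring
  have hval2 : y.val = 2 ^ (k - 1) * c := by omega
  have hc2 : c < 2 := by nlinarith
  interval_cases c
  · left; rw [← hval]; simp [hval2]
  · right; rw [← hval, hval2, mul_one]

variable (t) in
/-- the canonical order-2 element in coordinate `j` -/
def fj (j : Fin r) : ∀ i : Fin r, ZMod (2 ^ t i) :=
  Pi.single j ((2 ^ (t j - 1) : ℕ) : ZMod (2 ^ t j))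

lemma fj_self (j : Fin r) : fj t j j = ((2 ^ (t j - 1) : ℕ) : ZMod (2 ^ t j)) :=
  Pi.single_eq_same _ _

lemma fj_other {i j : Fin r} (h : i ≠ j) : fj t j i = 0 :=
  Pi.single_eq_of_ne h _

lemma fj_torsion (ht : ∀ i, 1 ≤ t i) (j : Fin r) : fj t j + fj t j = 0 := by
  funext i
  by_cases hij : i = j
  · subst hij
    have : (((2 ^ (t i - 1) + 2 ^ (t i - 1) : ℕ)) : ZMod (2 ^ t i)) = 0 := by
      rw [← two_pow_split (ht i)]
      exact (ZMod.natCast_eq_zero_iff _ _).2 dvd_rfl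
    simpa [fj_self, Nat.cast_add] using this
  · simp [Pi.add_apply, fj_other hij]

lemma fj_self_ne_zero (ht : ∀ i, 1 ≤ t i) (j : Fin r) : fj t j j ≠ 0 := by
  rw [fj_self]
  intro h
  have hdvd := (ZMod.natCast_eq_zero_iff _ _).1 h
  have := Nat.le_of_dvd (Nat.pow_pos (by norm_num)) hdvd
  have hlt : 2 ^ (t j - 1) < 2 ^ t j :=
    Nat.pow_lt_pow_right one_lt_two (by have := ht j; omega)
  omega

lemma single_eq_fj (ht : ∀ i, 1 ≤ t i) {x : ∀ i : Fin r, ZMod (2 ^ t i)}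
    (hx : x + x = 0) {j : Fin r} (h : x j ≠ 0) : Pi.single j (x j) = fj t j := by
  have h2 : x j + x j = 0 := congrFun hx j
  rcases zmod_two_torsion (ht j) h2 with h0 | hP
  · exact absurd h0 h
  · rw [fj, hP]

lemma phi_single_torsion (ht : ∀ i, 1 ≤ t i) {x : ∀ i : Fin r, ZMod (2 ^ t i)}
    (hx : x + x = 0) (φ : (∀ i : Fin r, ZMod (2 ^ t i)) →+ (∀ i : Fin r, ZMod (2 ^ t i)))
    (k : Fin r) (i : Fin r) :
    φ (Pi.single k (x k)) i = 0 ∨ φ (Pi.single k (x k)) i = φ (fj t k) i := by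
  by_cases h : x k = 0
  · left; rw [h]; simp
  · right; rw [single_eq_fj ht hx h]

/-- triangularity: for i < j, any endomorphism kills `fj j` in coordinate `i`. -/
lemma tri (hst : StrictMono t) (ht : ∀ i, 1 ≤ t i)
    (φ : (∀ i : Fin r, ZMod (2 ^ t i)) →+ (∀ i : Fin r, ZMod (2 ^ t i)))
    {i j : Fin r} (hij : i < j) : φ (fj t j) i = 0 := by
  have hone : (2 ^ (t j - 1)) • (1 : ZMod (2 ^ t j)) = ((2 ^ (t j - 1) : ℕ) : ZMod (2 ^ t j)) := by
    rw [nsmul_eq_mul, mul_one]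
  have hfj : fj t j = (2 ^ (t j - 1)) • Pi.single j (1 : ZMod (2 ^ t j)) := by
    rw [← Pi.single_smul, hone]
    rfl
  rw [hfj, map_nsmul]
  have : ((2 ^ (t j - 1)) • φ (Pi.single j (1 : ZMod (2 ^ t j)))) i
      = (2 ^ (t j - 1)) • (φ (Pi.single j (1 : ZMod (2 ^ t j))) i) := rfl
  rw [this, nsmul_eq_mul]
  have hcast : ((2 ^ (t j - 1) : ℕ) : ZMod (2 ^ t i)) = 0 := by
    refine (ZMod.natCast_eq_zero_iff _ _).2 (pow_dvd_pow 2 ?_)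
    have := hst hij
    omega
  push_cast at hcast ⊢
  rw [hcast, zero_mul]

/-- coordinate formula for torsion elements supported in high coordinates -/
lemma phi_coord (hst : StrictMono t) (ht : ∀ i, 1 ≤ t i)
    (φ : (∀ i : Fin r, ZMod (2 ^ t i)) →+ (∀ i : Fin r, ZMod (2 ^ t i)))
    {x : ∀ i : Fin r, ZMod (2 ^ t i)} (hx : x + x = 0) (i : Fin r)
    (hlow : ∀ k, k < i → x k = 0) :
    φ x i = φ (Pi.single i (x i)) i := by
  have hdecomp : x = ∑ k, Pi.single k (x k) := (Finset.univ_sum_single x).symm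
  have : φ x i = ∑ k, φ (Pi.single k (x k)) i := by
    conv_lhs => rw [hdecomp]
    rw [map_sum]
    exact congrFun (funext fun _ => rfl) i |>.trans (Finset.sum_apply i _ _)
  rw [this]
  rw [Finset.sum_eq_single i]
  · intro k _ hk
    rcases lt_or_gt_of_ne hk with hki | hki
    · rw [hlow k hki]; simp
    · rcases phi_single_torsion ht hx φ k i with h0 | hfjk
      · exact h0
      · rw [hfjk]; exact tri hst ht φ hki
  · intro h; exact absurd (Finset.mem_univ i) h

lemma phi_coord_zero (hst : StrictMono t) (ht : ∀ i, 1 ≤ t i)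
    (φ : (∀ i : Fin r, ZMod (2 ^ t i)) →+ (∀ i : Fin r, ZMod (2 ^ t i)))
    {x : ∀ i : Fin r, ZMod (2 ^ t i)} (hx : x + x = 0) (i : Fin r)
    (hlow : ∀ k, k ≤ i → x k = 0) :
    φ x i = 0 := by
  rw [phi_coord hst ht φ hx i (fun k hk => hlow k hk.le), hlow i le_rfl]
  simp

/-- any bijective endomorphism has nonzero diagonal on the 2-torsion filtration -/
lemma diag_ne_zero (hst : StrictMono t) (ht : ∀ i, 1 ≤ t i)
    (φ : (∀ i : Fin r, ZMod (2 ^ t i)) →+ (∀ i : Fin r, ZMod (2 ^ t i)))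
    (hφ : Function.Bijective ⇑φ) (j : Fin r) : φ (fj t j) j ≠ 0 := by
  intro hdiag
  set W : ℕ → Set (∀ i : Fin r, ZMod (2 ^ t i)) :=
    fun c => {x | x + x = 0 ∧ ∀ k : Fin r, (k : ℕ) < c → x k = 0} with hW
  -- φ maps W j into W (j+1)
  have hmaps : ∀ x ∈ W (j : ℕ), φ x ∈ W ((j : ℕ) + 1) := by
    rintro x ⟨hx2, hxlow⟩
    have hφx2 : φ x + φ x = 0 := by rw [← map_add, hx2, map_zero]
    refine ⟨hφx2, ?_⟩
    intro k hk
    rcases Nat.lt_or_ge (k : ℕ) (j : ℕ) with hkj | hkj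
    · exact phi_coord_zero hst ht φ hx2 k
        (fun k' hk' => hxlow k' (lt_of_le_of_lt (by exact_mod_cast hk') hkj))
    · have hkj' : k = j := Fin.ext (by omega)
      subst hkj'
      rw [phi_coord hst ht φ hx2 k (fun k' hk' => hxlow k' (by exact_mod_cast hk'))]
      rcases phi_single_torsion ht hx2 φ k k with h0 | hfjk
      · exact h0
      · rw [hfjk]; exact hdiag
  -- fj j ∈ W j \ W (j+1)
  have hfjW : fj t j ∈ W (j : ℕ) :=
    ⟨fj_torsion ht j, fun k hk => fj_other (by intro h; rw [h] at hk; omega)⟩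
  have hfjW' : fj t j ∉ W ((j : ℕ) + 1) := by
    rintro ⟨-, hlow⟩
    exact fj_self_ne_zero ht j (hlow j (by omega))
  -- cardinality contradiction
  have hfin : ∀ c, (W c).Finite := fun c => Set.toFinite _
  have hsub : W ((j : ℕ) + 1) ⊆ W (j : ℕ) := by
    rintro x ⟨hx2, hlow⟩
    exact ⟨hx2, fun k hk => hlow k (by omega)⟩
  have hss : W ((j : ℕ) + 1) ⊂ W (j : ℕ) := ⟨hsub, fun h => hfjW' (h hfjW)⟩
  have h1 : (W ((j : ℕ) + 1)).ncard < (W (j : ℕ)).ncard :=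
    Set.ncard_lt_ncard hss (hfin _)
  have h2 : (W (j : ℕ)).ncard ≤ (W ((j : ℕ) + 1)).ncard := by
    have himg : φ '' W (j : ℕ) ⊆ W ((j : ℕ) + 1) := by
      rintro y ⟨x, hx, rfl⟩; exact hmaps x hx
    calc (W (j : ℕ)).ncard = (φ '' W (j : ℕ)).ncard :=
          (Set.ncard_image_of_injective _ hφ.injective).symm
      _ ≤ (W ((j : ℕ) + 1)).ncard := Set.ncard_le_ncard himg (hfin _)
  omega

/-- nonzero diagonal implies injectivity on 2-torsion -/
lemma inj_of_diag (hst : StrictMono t) (ht : ∀ i, 1 ≤ t i)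
    (ψ : (∀ i : Fin r, ZMod (2 ^ t i)) →+ (∀ i : Fin r, ZMod (2 ^ t i)))
    (hdiag : ∀ j, ψ (fj t j) j ≠ 0) :
    ∀ x, x + x = 0 → ψ x = 0 → x = 0 := by
  intro x hx2 hψx
  by_contra hx
  have hne : (Finset.univ.filter fun i : Fin r => x i ≠ 0).Nonempty := by
    by_contra hem
    rw [Finset.not_nonempty_iff_eq_empty, Finset.filter_eq_empty_iff] at hem
    exact hx (funext fun i => by simpa using hem (Finset.mem_univ i))
  set j := (Finset.univ.filter fun i : Fin r => x i ≠ 0).min' hne with hj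
  have hxj : x j ≠ 0 := by
    have := (Finset.univ.filter fun i : Fin r => x i ≠ 0).min'_mem hne
    simpa using this
  have hlow : ∀ k, k < j → x k = 0 := by
    intro k hk
    by_contra hk0
    have : j ≤ k := Finset.min'_le _ _ (by simpa using hk0)
    omega
  have := phi_coord hst ht ψ hx2 j hlow
  rw [hψx] at this
  rw [single_eq_fj ht hx2 hxj] at this
  exact hdiag j (by simpa using this.symm)

/-- KEY: a sum of an odd number of automorphisms is an automorphism. -/
lemma odd_sum_bijective (hst : StrictMono t) (ht : ∀ i, 1 ≤ t i)
    (L : Multiset ((∀ i : Fin r, ZMod (2 ^ t i)) →+ (∀ i : Fin r, ZMod (2 ^ t i))))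
    (hL : ∀ φ ∈ L, Function.Bijective ⇑φ) (hodd : Odd (Multiset.card L)) :
    Function.Bijective ⇑L.sum := by
  set ψ := L.sum with hψ
  -- evaluation of multiset sums
  have heval : ∀ (M : Multiset ((∀ i : Fin r, ZMod (2 ^ t i)) →+ (∀ i : Fin r, ZMod (2 ^ t i))))
      (v : ∀ i : Fin r, ZMod (2 ^ t i)), M.sum v = (M.map fun φ => φ v).sum := by
    intro M v
    induction M using Multiset.induction with
    | empty => simp
    | cons φ M ih => simp [ih]
  -- diagonal of ψ
  have hdiag : ∀ j, ψ (fj t j) j ≠ 0 := by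
    intro j
    have h1 : ψ (fj t j) j = ((L.map fun φ => φ (fj t j)).map fun v => v j).sum := by
      rw [hψ, heval]
      induction' (L.map fun φ => φ (fj t j)) using Multiset.induction with v M ih
      · simp
      · simp [ih]
    have h2 : (L.map fun φ => φ (fj t j)).map (fun v => v j) =
        Multiset.replicate (Multiset.card L) ((2 ^ (t j - 1) : ℕ) : ZMod (2 ^ t j)) := by
      rw [Multiset.map_map]
      rw [Multiset.eq_replicate]
      constructor
      · simp
      · intro b hb
        obtain ⟨φ, hφ, rfl⟩ := Multiset.mem_map.1 hb
        have hbij := hL φ hφ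
        have hne := diag_ne_zero hst ht φ hbij j
        have htor : φ (fj t j) j + φ (fj t j) j = 0 := by
          have : φ (fj t j) + φ (fj t j) = 0 := by
            rw [← map_add, fj_torsion ht j, map_zero]
          exact congrFun this j
        rcases zmod_two_torsion (ht j) htor with h0 | hP
        · exact absurd h0 hne
        · exact hP
    rw [h1, h2, Multiset.sum_replicate]
    obtain ⟨n, hn⟩ := hodd
    rw [hn]
    have hc : ((2 ^ (t j - 1) : ℕ) : ZMod (2 ^ t j)) + ((2 ^ (t j - 1) : ℕ) : ZMod (2 ^ t j))
        = 0 := by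
      rw [← Nat.cast_add, ← two_pow_split (ht j)]
      exact (ZMod.natCast_eq_zero_iff _ _).2 dvd_rfl
    have : (2 * n + 1) • ((2 ^ (t j - 1) : ℕ) : ZMod (2 ^ t j))
        = ((2 ^ (t j - 1) : ℕ) : ZMod (2 ^ t j)) := by
      rw [add_nsmul, one_nsmul, two_mul, add_nsmul, ← nsmul_add, hc, smul_zero, zero_add]
    rw [this]
    intro h
    have hdvd := (ZMod.natCast_eq_zero_iff _ _).1 h
    have := Nat.le_of_dvd (Nat.pow_pos (by norm_num)) hdvd
    have hlt : 2 ^ (t j - 1) < 2 ^ t j :=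
      Nat.pow_lt_pow_right one_lt_two (by have := ht j; omega)
    omega
  -- 2-torsion injectivity
  have htorinj := inj_of_diag hst ht ψ hdiag
  -- full injectivity
  have haux : ∀ (n : ℕ) (x : ∀ i : Fin r, ZMod (2 ^ t i)), 2 ^ n • x = 0 → ψ x = 0 → x = 0 := by
    intro n
    induction n with
    | zero => intro x hx _; simpa using hx
    | succ n ih =>
      intro x hx hψx
      have h2x : 2 • x + 2 • x = 0 → True := fun _ => trivial
      have hx2 : (2 : ℕ) • x = 0 := by
        refine ih (2 • x) ?_ ?_
        · rw [← mul_smul, ← pow_succ]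
          exact hx
        · rw [map_nsmul, hψx, smul_zero]
      have : x + x = 0 := by rw [← two_nsmul]; exact hx2
      exact htorinj x this hψx
  have hinj : Function.Injective ⇑ψ := by
    rw [injective_iff_map_eq_zero]
    intro x hx
    set N := ∑ i, t i with hN
    refine haux N x ?_ hx
    funext i
    have hdvd : 2 ^ t i ∣ 2 ^ N := by
      refine pow_dvd_pow 2 ?_
      exact Finset.single_le_sum (fun _ _ => Nat.zero_le _) (Finset.mem_univ i)
    have : (2 ^ N • x) i = (2 ^ N : ℕ) • x i := rfl
    rw [this, nsmul_eq_mul]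
    have hcast : ((2 ^ N : ℕ) : ZMod (2 ^ t i)) = 0 :=
      (ZMod.natCast_eq_zero_iff _ _).2 hdvd
    push_cast at hcast ⊢
    rw [hcast, zero_mul]
    rfl
  exact Finite.injective_iff_bijective.1 hinj

end Key

section Converse

variable {G : Type*} [AddCommGroup G]

lemma seminormal_kill
    (hsn : ∀ S : Multiset G,
      (∃ m : ℕ, Odd m ∧ IsWZS (autWeights G) (m • S)) → IsWZS (autWeights G) S)
    (g : G) (L : Multiset (G →+ G)) (hL : ∀ φ ∈ L, Function.Bijective ⇑φ)
    (hodd : Odd (Multiset.card L)) (hsum : (L.map fun φ => φ g).sum = 0) : g = 0 := by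
  have h1 : IsWZS (autWeights G) ((Multiset.card L) • ({g} : Multiset G)) := by
    refine ⟨L.map fun φ => (g, φ), ?_, ?_, ?_⟩
    · rintro p hp
      obtain ⟨φ, hφ, rfl⟩ := Multiset.mem_map.1 hp
      exact hL φ hφ
    · rw [Multiset.map_map, Multiset.nsmul_singleton]
      simp
    · rw [Multiset.map_map]
      exact hsum
  have h2 := hsn {g} ⟨Multiset.card L, hodd, h1⟩
  obtain ⟨T, hmem, hT, hs⟩ := h2
  obtain ⟨p, rfl, hp1⟩ := Multiset.map_eq_singleton.1 hT
  have hz : p.2 p.1 = 0 := by simpa using hs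
  have hinj := (hmem p (Multiset.mem_singleton_self p)).injective
  have : p.2 p.1 = p.2 0 := by rw [map_zero]; exact hz
  rw [← hp1]
  exact hinj this

lemma odd_smul_kill
    (hsn : ∀ S : Multiset G,
      (∃ m : ℕ, Odd m ∧ IsWZS (autWeights G) (m • S)) → IsWZS (autWeights G) S)
    (m : ℕ) (hm : Odd m) (g : G) (hg : m • g = 0) : g = 0 := by
  refine seminormal_kill hsn g (Multiset.replicate m (AddMonoidHom.id G)) ?_ ?_ ?_
  · intro φ hφ
    rw [Multiset.eq_of_mem_replicate hφ]
    exact Function.bijective_id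
  · simpa using hm
  · rw [Multiset.map_replicate, Multiset.sum_replicate]
    simpa using hg

lemma unipotent_bijective {Q : Type*} [AddCommGroup Q] (n : Q →+ Q)
    (hn : ∀ x, n (n x) = 0) : Function.Bijective ⇑(AddMonoidHom.id Q + n) := by
  have hli : Function.LeftInverse (fun x => x - n x) ⇑(AddMonoidHom.id Q + n) := by
    intro x
    simp only [AddMonoidHom.add_apply, AddMonoidHom.id_apply, map_add, hn]
    abel
  have hri : Function.RightInverse (fun x => x - n x) ⇑(AddMonoidHom.id Q + n) := by
    intro x
    simp only [AddMonoidHom.add_apply, AddMonoidHom.id_apply, map_sub, hn]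
    abel
  exact ⟨hli.injective, hri.surjective⟩

lemma repeat_contra {N : ℕ} {a : Fin N → ℕ} (ha1 : ∀ i, 1 ≤ a i) {i j : Fin N} (hij : i ≠ j)
    (hab : a j = a i) :
    ∃ (g : ∀ k, ZMod (2 ^ a k)) (L : Multiset ((∀ k, ZMod (2 ^ a k)) →+ (∀ k, ZMod (2 ^ a k)))),
      g ≠ 0 ∧ (∀ φ ∈ L, Function.Bijective ⇑φ) ∧ Multiset.card L = 3 ∧
      (L.map fun φ => φ g).sum = 0 := by
  classical
  set c : ZMod (2 ^ a j) ≃+* ZMod (2 ^ a i) := ZMod.ringEquivCongr (by rw [hab]) with hcdef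
  have hji : j ≠ i := hij.symm
  -- nilpotent maps
  set nB : (∀ k, ZMod (2 ^ a k)) →+ (∀ k, ZMod (2 ^ a k)) :=
    (AddMonoidHom.single (fun k => ZMod (2 ^ a k)) i).comp
      (c.toAddMonoidHom.comp (Pi.evalAddMonoidHom (fun k => ZMod (2 ^ a k)) j)) with hnB
  set nC : (∀ k, ZMod (2 ^ a k)) →+ (∀ k, ZMod (2 ^ a k)) :=
    (AddMonoidHom.single (fun k => ZMod (2 ^ a k)) j).comp
      (c.symm.toAddMonoidHom.comp (Pi.evalAddMonoidHom (fun k => ZMod (2 ^ a k)) i)) with hnC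
  have hnB_apply : ∀ x : ∀ k, ZMod (2 ^ a k), nB x = Pi.single i (c (x j)) := fun x => rfl
  have hnC_apply : ∀ x : ∀ k, ZMod (2 ^ a k), nC x = Pi.single j (c.symm (x i)) := fun x => rfl
  have hnBn : ∀ x, nB (nB x) = 0 := by
    intro x
    rw [hnB_apply, hnB_apply, Pi.single_eq_of_ne hji, map_zero]
    exact Pi.single_zero i
  have hnCn : ∀ x, nC (nC x) = 0 := by
    intro x
    rw [hnC_apply, hnC_apply, Pi.single_eq_of_ne hij, map_zero]
    exact Pi.single_zero j
  set g : ∀ k, ZMod (2 ^ a k) := Pi.single i (-(c 1)) + Pi.single j 1 with hgdef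
  have hgi : g i = -(c 1) := by
    rw [hgdef, Pi.add_apply, Pi.single_eq_same, Pi.single_eq_of_ne hij, add_zero]
  have hgj : g j = 1 := by
    rw [hgdef, Pi.add_apply, Pi.single_eq_same, Pi.single_eq_of_ne hji, zero_add]
  have hgk : ∀ k, k ≠ i → k ≠ j → g k = 0 := by
    intro k hki hkj
    rw [hgdef, Pi.add_apply, Pi.single_eq_of_ne hki, Pi.single_eq_of_ne hkj, add_zero]
  haveI : Fact (1 < 2 ^ a j) := ⟨by
    calc 1 < 2 ^ 1 := by norm_num
      _ ≤ 2 ^ a j := Nat.pow_le_pow_right (by norm_num) (ha1 j)⟩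
  refine ⟨g, (-(AddMonoidHom.id (∀ k, ZMod (2 ^ a k)))) ::ₘ
    (AddMonoidHom.id (∀ k, ZMod (2 ^ a k)) + nB) ::ₘ
    {AddMonoidHom.id (∀ k, ZMod (2 ^ a k)) + nC}, ?_, ?_, ?_, ?_⟩
  · intro h0
    have h1 : g j = 0 := by rw [h0]; rfl
    rw [hgj] at h1
    exact one_ne_zero h1
  · intro φ hφ
    rcases Multiset.mem_cons.1 hφ with rfl | hφ
    · exact Function.Involutive.bijective neg_involutive
    rcases Multiset.mem_cons.1 hφ with rfl | hφ
    · exact unipotent_bijective nB hnBn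
    rw [Multiset.mem_singleton.1 hφ]
    exact unipotent_bijective nC hnCn
  · rfl
  · simp only [Multiset.map_cons, Multiset.map_singleton, Multiset.sum_cons,
      Multiset.sum_singleton, AddMonoidHom.add_apply, AddMonoidHom.id_apply,
      AddMonoidHom.neg_apply]
    rw [hnB_apply, hnC_apply, hgj, hgi, map_neg, RingEquiv.symm_apply_apply]
    funext k
    simp only [Pi.add_apply, Pi.neg_apply, Pi.zero_apply]
    by_cases hki : k = i
    · subst hki
      rw [Pi.single_eq_same, Pi.single_eq_of_ne hij, hgi]
      abel
    · by_cases hkj : k = j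
      · subst hkj
        rw [Pi.single_eq_of_ne hji, Pi.single_eq_same, hgj]
        abel
      · rw [Pi.single_eq_of_ne hki, Pi.single_eq_of_ne hkj, hgk k hki hkj]
        abel

end Converse

lemma converse_main {G : Type*} [AddCommGroup G] [Fintype G]
    (hsn : ∀ S : Multiset G,
      (∃ m : ℕ, Odd m ∧ IsWZS (autWeights G) (m • S)) → IsWZS (autWeights G) S) :
    ∃ (r : ℕ) (t : Fin r → ℕ), StrictMono t ∧ (∀ i, 1 ≤ t i) ∧
      Nonempty (G ≃+ ((i : Fin r) → ZMod (2 ^ t i))) := by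
  classical
  obtain ⟨ι, hι, n, hn1, ⟨e0⟩⟩ := AddCommGroup.equiv_directSum_zmod_of_finite' G
  haveI := hι
  set N := Fintype.card ι with hN
  set σ0 : ι ≃ Fin N := Fintype.equivFin ι with hσ0
  set b : Fin N → ℕ := n ∘ σ0.symm with hb
  have hb1 : ∀ k, 1 < b k := fun k => hn1 _
  let e1 : G ≃+ ∀ i : ι, ZMod (n i) := e0.trans (DirectSum.addEquivProd _)
  let e2 : (∀ i : ι, ZMod (n i)) ≃+ ∀ k : Fin N, ZMod (b k) :=
    { Equiv.piCongrLeft' (fun i => ZMod (n i)) σ0 with map_add' := fun _ _ => rfl }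
  let e3 : G ≃+ ∀ k : Fin N, ZMod (b k) := e1.trans e2
  -- transfer odd-kill to the Pi side
  have hkill : ∀ (m : ℕ), Odd m → ∀ x : ∀ k : Fin N, ZMod (b k), m • x = 0 → x = 0 := by
    intro m hm x hx
    have h1 : m • e3.symm x = 0 := by rw [← map_nsmul, hx, map_zero]
    have h0 := odd_smul_kill hsn m hm _ h1
    have h2 := congrArg e3 h0
    rwa [AddEquiv.apply_symm_apply, map_zero] at h2
  -- each b k is a power of 2
  have hpow : ∀ k, ∃ a : ℕ, b k = 2 ^ a := by
    intro k
    have hbk0 : b k ≠ 0 := by have := hb1 k; omega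
    have hqodd : Odd (ordCompl[2] (b k)) := by
      rcases Nat.even_or_odd (ordCompl[2] (b k)) with he | ho
      · exact absurd (even_iff_two_dvd.1 he) (Nat.not_dvd_ordCompl Nat.prime_two hbk0)
      · exact ho
    have hfac : 2 ^ ((b k).factorization 2) * ordCompl[2] (b k) = b k :=
      Nat.ordProj_mul_ordCompl_eq_self (b k) 2
    have h1 : (b k) • Pi.single (M := fun k' => ZMod (b k')) k 1 = (0 : ∀ k', ZMod (b k')) := by
      funext k'
      rw [Pi.smul_apply, Pi.zero_apply]
      by_cases hk' : k' = k
      · subst hk'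
        rw [Pi.single_eq_same, nsmul_eq_mul, mul_one, ZMod.natCast_self]
      · rw [Pi.single_eq_of_ne hk', smul_zero]
    have h2 : (ordCompl[2] (b k)) • ((2 ^ ((b k).factorization 2)) •
        Pi.single (M := fun k' => ZMod (b k')) k 1) = 0 := by
      rw [← mul_smul, mul_comm, hfac, h1]
    have h3 := hkill _ hqodd _ h2
    have h4 : (2 ^ ((b k).factorization 2) : ℕ) • (1 : ZMod (b k)) = 0 := by
      have := congrFun h3 k
      simpa [Pi.single_eq_same] using this
    have h5 : ((2 ^ ((b k).factorization 2) : ℕ) : ZMod (b k)) = 0 := by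
      rw [← h4, nsmul_eq_mul, mul_one]
    have h6 : b k ∣ 2 ^ ((b k).factorization 2) :=
      (ZMod.natCast_eq_zero_iff _ _).1 h5
    obtain ⟨a, -, ha⟩ := (Nat.dvd_prime_pow Nat.prime_two).1 h6
    exact ⟨a, ha⟩
  choose a ha using hpow
  have ha1 : ∀ k, 1 ≤ a k := by
    intro k
    by_contra h
    push_neg at h
    have h0 : a k = 0 := by omega
    have hk1 := hb1 k
    rw [ha k, h0, pow_zero] at hk1
    omega
  let e4 : (∀ k : Fin N, ZMod (b k)) ≃+ ∀ k : Fin N, ZMod (2 ^ a k) :=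
    AddEquiv.piCongrRight (fun k => (ZMod.ringEquivCongr (ha k)).toAddEquiv)
  let e5 : G ≃+ ∀ k : Fin N, ZMod (2 ^ a k) := e3.trans e4
  -- a is injective
  have hainj : Function.Injective a := by
    intro i j hija
    by_contra hne
    obtain ⟨g, L, hg0, hLbij, hLcard, hLsum⟩ := repeat_contra ha1 hne hija.symm
    set g' := e5.symm g with hg'
    set L' := L.map (fun φ => ((e5.symm.toAddMonoidHom.comp φ).comp e5.toAddMonoidHom)) with hL'
    have hbij' : ∀ ψ ∈ L', Function.Bijective ⇑ψ := by
      intro ψ hψ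
      obtain ⟨φ, hφ, rfl⟩ := Multiset.mem_map.1 hψ
      have : Function.Bijective ⇑((e5.symm.toAddMonoidHom.comp φ).comp e5.toAddMonoidHom) := by
        simp only [AddMonoidHom.coe_comp, AddEquiv.coe_toAddMonoidHom]
        exact (e5.symm.bijective.comp (hLbij φ hφ)).comp e5.bijective
      exact this
    have hodd' : Odd (Multiset.card L') := by
      rw [hL', Multiset.card_map, hLcard]
      exact ⟨1, by norm_num⟩
    have hsum' : (L'.map fun ψ => ψ g').sum = 0 := by
      rw [hL', Multiset.map_map]
      have hcongr : L.map ((fun ψ : G →+ G => ψ g') ∘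
            (fun φ => (e5.symm.toAddMonoidHom.comp φ).comp e5.toAddMonoidHom))
          = L.map (fun φ => e5.symm (φ g)) :=
        Multiset.map_congr rfl (fun φ _ => by simp [hg'])
      rw [hcongr]
      have hmm : L.map (fun φ => e5.symm (φ g)) = (L.map (fun φ => φ g)).map ⇑e5.symm := by
        rw [Multiset.map_map]
        rfl
      rw [hmm, ← AddEquiv.coe_toAddMonoidHom, ← map_multiset_sum, hLsum, map_zero]
    have := seminormal_kill hsn g' L' hbij' hodd' hsum'
    rw [hg'] at this
    have h2 := congrArg e5 this
    rw [AddEquiv.apply_symm_apply, map_zero] at h2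
    exact hg0 h2
  -- sort
  set σ1 := Tuple.sort a with hσ1
  set t : Fin N → ℕ := a ∘ σ1 with ht
  have htmono : Monotone t := Tuple.monotone_sort a
  have htinj : Function.Injective t := hainj.comp σ1.injective
  have htsm : StrictMono t := htmono.strictMono_of_injective htinj
  let e6 : (∀ k : Fin N, ZMod (2 ^ a k)) ≃+ ∀ k : Fin N, ZMod (2 ^ t k) :=
    { Equiv.piCongrLeft' (fun k => ZMod (2 ^ a k)) σ1.symm with map_add' := fun _ _ => rfl }
  exact ⟨N, t, htsm, fun k => ha1 (σ1 k), ⟨e5.trans e6⟩⟩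

theorem stmt10 {G : Type*} [AddCommGroup G] [Fintype G] :
    ((∃ (r : ℕ) (t : Fin r → ℕ), StrictMono t ∧ (∀ i, 1 ≤ t i) ∧
        Nonempty (G ≃+ ((i : Fin r) → ZMod (2 ^ t i)))) →
      ∀ S : Multiset G,
        (∃ m : ℕ, Odd m ∧ IsWZS (autWeights G) (m • S)) → IsWZS (autWeights G) S)
    ∧ (1 < Fintype.card G →
        (∀ S : Multiset G,
          (∃ m : ℕ, Odd m ∧ IsWZS (autWeights G) (m • S)) → IsWZS (autWeights G) S) →
        ∃ (r : ℕ) (t : Fin r → ℕ), StrictMono t ∧ (∀ i, 1 ≤ t i) ∧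
          Nonempty (G ≃+ ((i : Fin r) → ZMod (2 ^ t i)))) := by
  constructor
  · rintro ⟨r, t, hst, ht1, ⟨e⟩⟩ S ⟨m, hm, hws⟩
    have h1 : IsWZS (autWeights (∀ i : Fin r, ZMod (2 ^ t i))) ((m • S).map ⇑e) :=
      isWZS_map e hws
    rw [Multiset.map_nsmul] at h1
    have h2 := sigma_nsmul (isWZS_iff_zero_mem.1 h1)
    have h3 : NSum (autWeights (∀ i : Fin r, ZMod (2 ^ t i))) m
        ⊆ autWeights (∀ i : Fin r, ZMod (2 ^ t i)) := by
      rintro ψ ⟨L, hL, hcard, rfl⟩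
      exact odd_sum_bijective hst ht1 L hL (by rwa [hcard])
    have h4 : IsWZS (autWeights (∀ i : Fin r, ZMod (2 ^ t i))) (S.map ⇑e) :=
      isWZS_iff_zero_mem.2 (sigma_mono h3 h2)
    have h5 := isWZS_map e.symm h4
    rw [Multiset.map_map] at h5
    have hid : (⇑e.symm ∘ ⇑e) = id := funext fun x => e.symm_apply_apply x
    rwa [hid, Multiset.map_id] at h5
  · exact fun _ hsn => converse_main hsn
end

section
/- Let G be a finite abelian 2-group with basis (e₁,…,e_r) where ord(eᵢ) = 2^{tᵢ} and t₁ < … < t_r. If m ∈ [1,r], k ∈ ℕ is odd, and α ∈ ⟨e₁,…,e_{m−1}, 2e_m, e_{m+1},…,e_r⟩ with ord(α) ≤ 2^{t_m}, then (e₁,…,e_{m−1}, k·e_m + α, e_{m+1},…,e_r) is also a basis of G. -/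
lemma aux_mem_closure {G : Type*} [AddCommGroup G] {r : ℕ} (v : Fin r → G) (x : G)
    (h : x ∈ AddSubgroup.closure (Set.range v)) : ∃ c : Fin r → ℤ, ∑ i, c i • v i = x := by
  rw [← Submodule.span_int_eq_addSubgroupClosure] at h
  obtain ⟨c, hc⟩ := Finsupp.mem_span_range_iff_exists_finsupp.mp h
  refine ⟨c, ?_⟩
  rwa [Finsupp.sum_fintype _ _ (by simp)] at hc

lemma aux_sum_update {G : Type*} [AddCommGroup G] {r : ℕ} (e : Fin r → G) (m : Fin r)
    (b : Fin r → ℤ) (x : G) :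
    ∑ i, b i • Function.update e m x i = b m • x + ∑ i ∈ Finset.univ \ {m}, b i • e i := by
  have : (fun i => b i • Function.update e m x i)
      = Function.update (fun i => b i • e i) m (b m • x) := by
    funext i
    rcases eq_or_ne i m with rfl | h
    · simp
    · simp [Function.update_of_ne h]
  rw [this, Finset.sum_update_of_mem (Finset.mem_univ m)]

lemma aux_key {G : Type*} [AddCommGroup G] {r : ℕ} (e : Fin r → G) (m : Fin r)
    (b : Fin r → ℤ) :
    ∑ i, b i • e i = b m • e m + ∑ i ∈ Finset.univ \ {m}, b i • e i := by
  conv_lhs => rw [← Function.update_eq_self m e]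
  exact aux_sum_update e m b (e m)

theorem stmt11 {G : Type*} [AddCommGroup G] [Fintype G] {r : ℕ} (e : Fin r → G)
    (t : Fin r → ℕ) (ht : StrictMono t) (ht1 : ∀ i, 1 ≤ t i)
    (hord : ∀ i, addOrderOf (e i) = 2 ^ t i)
    (hbasis : IsBasisTuple e)
    (m : Fin r) (k : ℕ) (hk : Odd k) (α : G)
    (hα : α ∈ AddSubgroup.closure (Set.range (Function.update e m (2 • e m))))
    (hαord : addOrderOf α ≤ 2 ^ t m) :
    IsBasisTuple (Function.update e m (k • e m + α)) := by
  obtain ⟨hne, hind, hgen⟩ := hbasis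
  obtain ⟨c, hc⟩ := aux_mem_closure _ α hα
  set f : G := k • e m + α with hf
  set K : ℤ := (k : ℤ) + 2 * c m with hK
  have hz2 : ∀ x : G, (2 : ℤ) • x = (2 : ℕ) • x := by
    intro x; rw [← natCast_zsmul]; norm_num
  have hzk : ∀ x : G, (k : ℤ) • x = k • x := fun x => natCast_zsmul x k
  have hK2 : ¬ (2:ℤ) ∣ K := by
    obtain ⟨j, hj⟩ := hk
    rintro ⟨q, hq⟩
    have hjz : (k : ℤ) = 2 * j + 1 := by exact_mod_cast hj
    omega
  have hei : ∀ i, ((2:ℤ) ^ t i) • e i = 0 := by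
    intro i
    rw [← addOrderOf_dvd_iff_zsmul_eq_zero, hord i]
    push_cast
    rfl
  have hu_zero : ∀ (T : ℕ) i, t i ≤ T → ((2:ℤ) ^ T) • Function.update e m (2 • e m) i = 0 := by
    intro T i hT
    obtain ⟨q, hq⟩ : ((2:ℤ) ^ t i) ∣ 2 ^ T := pow_dvd_pow 2 hT
    rcases eq_or_ne i m with rfl | h
    · rw [Function.update_self, hq, mul_smul, smul_comm ((2:ℤ) ^ t i) q,
        smul_comm ((2:ℤ) ^ t i) (2 : ℕ), hei i, smul_zero, smul_zero]
    · rw [Function.update_of_ne h, hq, mul_smul, smul_comm, hei i, smul_zero]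
  -- order of α
  have hα2 : ((2:ℤ) ^ t m) • α = 0 := by
    set T : ℕ := ∑ i, t i with hT
    have hTα : ((2:ℤ) ^ T) • α = 0 := by
      rw [← hc, Finset.smul_sum]
      refine Finset.sum_eq_zero fun i _ => ?_
      rw [smul_comm, hu_zero T i (Finset.single_le_sum (f := t) (fun i _ => Nat.zero_le _)
        (Finset.mem_univ i)), smul_zero]
    have hTα' : (2 ^ T : ℕ) • α = 0 := by
      rw [← natCast_zsmul]; push_cast; exact hTα
    obtain ⟨s, _, hset⟩ := (Nat.dvd_prime_pow Nat.prime_two).mp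
      (addOrderOf_dvd_of_nsmul_eq_zero hTα')
    have hsle : s ≤ t m := by
      by_contra hlt
      have h1 : 2 ^ t m < 2 ^ s := Nat.pow_lt_pow_right one_lt_two (by omega)
      omega
    have hdvd : addOrderOf α ∣ 2 ^ t m := hset ▸ pow_dvd_pow 2 hsle
    have := addOrderOf_dvd_iff_nsmul_eq_zero.mp hdvd
    rw [← natCast_zsmul] at this; push_cast at this; exact this
  -- relation giving divisibility for coefficients c i, i ≠ m
  have hdi : ∀ i, i ≠ m → ((2:ℤ) ^ t m * c i) • e i = 0 := by
    set d : Fin r → ℤ := Function.update (fun i => 2 ^ t m * c i) m (2 ^ t m * c m * 2) with hd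
    have hsum : ∑ i, d i • e i = 0 := by
      have h1 : ∑ i, d i • e i
          = (2 ^ t m * c m * 2) • e m + ∑ i ∈ Finset.univ \ {m}, (2 ^ t m * c i) • e i := by
        rw [aux_key e m d, hd, Function.update_self]
        congr 1
        refine Finset.sum_congr rfl fun i hi => ?_
        rw [Function.update_of_ne (Finset.notMem_singleton.mp (Finset.mem_sdiff.mp hi).2)]
      have h2 : ((2:ℤ) ^ t m) • α
          = (2 ^ t m * c m) • (2 • e m) + ∑ i ∈ Finset.univ \ {m}, (2 ^ t m * c i) • e i := by
        rw [← hc, Finset.smul_sum]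
        have h3 : ∀ i, ((2:ℤ) ^ t m) • (c i • Function.update e m (2 • e m) i)
            = (2 ^ t m * c i) • Function.update e m (2 • e m) i := fun i => (mul_smul _ _ _).symm
        rw [Finset.sum_congr rfl fun i _ => h3 i]
        exact aux_sum_update e m (fun i => 2 ^ t m * c i) (2 • e m)
      have h4 : ((2:ℤ) ^ t m * c m * 2) • e m = ((2:ℤ) ^ t m * c m) • (2 • e m) := by
        rw [mul_smul, hz2]
      rw [h1, h4, ← h2, hα2]
    intro i hi
    have := hind d hsum i
    rwa [hd, Function.update_of_ne hi] at this
  -- expression of f in the e basis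
  have hfe' : f = K • e m + ∑ i ∈ Finset.univ \ {m}, c i • e i := by
    have h2 : α = c m • (2 • e m) + ∑ i ∈ Finset.univ \ {m}, c i • e i := by
      rw [← hc]; exact aux_sum_update e m c (2 • e m)
    rw [hf, h2, ← hz2, smul_smul, ← add_assoc, ← hzk, ← add_smul, hK, mul_comm]
  have hnf : ∀ z : ℤ, z • f = (z * K) • e m + ∑ i ∈ Finset.univ \ {m}, (z * c i) • e i := by
    intro z
    rw [hfe', smul_add, smul_smul, Finset.smul_sum]
    congr 1
    exact Finset.sum_congr rfl fun i _ => (mul_smul _ _ _).symm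
  have hmem : ∀ j, j ≠ m →
      e j ∈ AddSubgroup.closure (Set.range (Function.update e m f)) := fun j hj =>
    AddSubgroup.subset_closure ⟨j, Function.update_of_ne hj f e⟩
  refine ⟨?_, ?_, ?_⟩
  · -- nonzero
    intro i
    rcases eq_or_ne i m with rfl | h
    · rw [Function.update_self]
      intro hf0
      set b : Fin r → ℤ := Function.update c i K with hb
      have hsum : ∑ j, b j • e j = 0 := by
        have h1 : ∑ j, b j • e j = K • e i + ∑ j ∈ Finset.univ \ {i}, c j • e j := by
          rw [aux_key e i b, hb, Function.update_self]
          congr 1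
          refine Finset.sum_congr rfl fun j hj => ?_
          rw [Function.update_of_ne (Finset.notMem_singleton.mp (Finset.mem_sdiff.mp hj).2)]
        rw [h1, ← hfe']; exact hf0
      have h2 := hind b hsum i
      rw [hb, Function.update_self] at h2
      have h3 := addOrderOf_dvd_iff_zsmul_eq_zero.mpr h2
      rw [hord i] at h3
      apply hK2
      refine dvd_trans ?_ h3
      push_cast
      exact dvd_pow_self 2 (by have := ht1 i; omega)
    · rw [Function.update_of_ne h]; exact hne i
  · -- independence
    intro n hn
    set n' : Fin r → ℤ := Function.update (fun i => n i + n m * c i) m (n m * K) with hn'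
    have hrel : ∑ i, n' i • e i = 0 := by
      have h1 : ∑ i, n' i • e i
          = (n m * K) • e m + ∑ i ∈ Finset.univ \ {m}, (n i + n m * c i) • e i := by
        rw [aux_key e m n', hn', Function.update_self]
        congr 1
        refine Finset.sum_congr rfl fun i hi => ?_
        rw [Function.update_of_ne (Finset.notMem_singleton.mp (Finset.mem_sdiff.mp hi).2)]
      have h2 : ∑ i, n i • Function.update e m f i
          = n m • f + ∑ i ∈ Finset.univ \ {m}, n i • e i := aux_sum_update e m n f
      rw [h1]
      rw [h2, hnf (n m)] at hn
      rw [← hn, add_assoc, ← Finset.sum_add_distrib]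
      congr 1
      exact Finset.sum_congr rfl fun i _ => by rw [add_smul]; abel
    have h := hind n' hrel
    have hm := h m
    rw [hn', Function.update_self] at hm
    have hdvd : ((2:ℤ) ^ t m) ∣ n m := by
      have h1 : ((2:ℤ) ^ t m) ∣ n m * K := by
        have h3 := addOrderOf_dvd_iff_zsmul_eq_zero.mpr hm
        rw [hord m] at h3
        have h4 : (((2:ℕ) ^ t m : ℕ) : ℤ) = (2:ℤ) ^ t m := by push_cast; rfl
        rwa [h4] at h3
      have hcop : IsCoprime ((2:ℤ) ^ t m) K :=
        ((Int.prime_two.coprime_iff_not_dvd).mpr hK2).pow_left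
      exact hcop.dvd_of_dvd_mul_right h1
    obtain ⟨q, hq⟩ := hdvd
    have hnm_em : n m • e m = 0 := by
      rw [hq, mul_comm, mul_smul, hei m, smul_zero]
    have hnm_α : n m • α = 0 := by
      rw [hq, mul_comm, mul_smul, hα2, smul_zero]
    intro i
    rcases eq_or_ne i m with rfl | hi
    · rw [Function.update_self, hf, smul_add, smul_comm, hnm_em, smul_zero, hnm_α, add_zero]
    · rw [Function.update_of_ne hi]
      have h1 := h i
      rw [hn', Function.update_of_ne hi] at h1
      have h2 : (n m * c i) • e i = 0 := by
        have h3 := hdi i hi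
        have h4 : n m * c i = q * (2 ^ t m * c i) := by rw [hq]; ring
        rw [h4, mul_smul, h3, smul_zero]
      rw [add_smul, h2, add_zero] at h1
      exact h1
  · -- generation
    rw [eq_top_iff, ← hgen, AddSubgroup.closure_le]
    rintro x ⟨i, rfl⟩
    rcases eq_or_ne i m with rfl | hi
    · have hfmem : f ∈ AddSubgroup.closure (Set.range (Function.update e i f)) :=
        AddSubgroup.subset_closure ⟨i, Function.update_self i f e⟩
      have hKmem : K • e i ∈ AddSubgroup.closure (Set.range (Function.update e i f)) := by
        have h1 : K • e i = f - ∑ j ∈ Finset.univ \ {i}, c j • e j := by rw [hfe']; abel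
        rw [h1]
        refine AddSubgroup.sub_mem _ hfmem (AddSubgroup.sum_mem _ fun j hj => ?_)
        exact AddSubgroup.zsmul_mem _
          (hmem j (Finset.notMem_singleton.mp (Finset.mem_sdiff.mp hj).2)) _
      have hcop : IsCoprime K ((2:ℤ) ^ t i) :=
        (((Int.prime_two.coprime_iff_not_dvd).mpr hK2).pow_left).symm
      obtain ⟨a, b, hab⟩ := hcop
      have h1 : e i = a • (K • e i) := by
        have h2 : ((a * K + b * 2 ^ t i)) • e i = e i := by rw [hab, one_smul]
        rw [add_smul, mul_smul, mul_smul, hei i, smul_zero, add_zero] at h2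
        exact h2.symm
      rw [SetLike.mem_coe, h1]
      exact AddSubgroup.zsmul_mem _ hKmem a
    · exact hmem i hi
end

section
/- Let G be a finite abelian group, Γ ⊆ Aut(G) a subgroup, and S₁, S₂ nonempty sequences over G. Then S₁ and S₂ are ℬ_Γ(G)-equivalent in ℱ(G) (i.e., for all T ∈ ℱ(G), TS₁ ∈ ℬ_Γ(G) iff TS₂ ∈ ℬ_Γ(G)) if and only if σ_Γ(S₁) = σ_Γ(S₂). -/
open Classical in
lemma map_split {α β : Type*} (f : α → β) (T : Multiset α) (A B : Multiset β)
    (h : T.map f = A + B) :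
    ∃ TA TB : Multiset α, T = TA + TB ∧ TA.map f = A ∧ TB.map f = B := by
  classical
  induction A using Multiset.induction generalizing T with
  | empty => exact ⟨0, T, by simp, by simp, by simpa using h⟩
  | cons a A ih =>
    rw [Multiset.cons_add] at h
    obtain ⟨x, hx, hfx, hrest⟩ := (Multiset.map_eq_cons f T (A + B) a).2 h
    obtain ⟨TA, TB, hT, hA, hB⟩ := ih _ hrest
    refine ⟨x ::ₘ TA, TB, ?_, by simp [hA, hfx], hB⟩
    rw [Multiset.cons_add, ← hT, Multiset.cons_erase hx]

lemma wzs_iff_zero_mem {G : Type*} [AddCommGroup G] (Γ : Set (G →+ G)) (S : Multiset G) :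
    IsWZS Γ S ↔ (0 : G) ∈ sigmaSet Γ S := Iff.rfl

lemma sigma_nonempty {G : Type*} [AddCommGroup G] (Γ : Set (G →+ G))
    (hId : AddMonoidHom.id G ∈ Γ) (S : Multiset G) : (sigmaSet Γ S).Nonempty := by
  refine ⟨(S.map (AddMonoidHom.id G)).sum, S.map (fun g => (g, AddMonoidHom.id G)), ?_, ?_, ?_⟩
  · intro p hp; obtain ⟨g, _, rfl⟩ := Multiset.mem_map.1 hp; exact hId
  · rw [Multiset.map_map]; simp
  · rw [Multiset.map_map]; rfl

lemma sigma_add {G : Type*} [AddCommGroup G] (Γ : Set (G →+ G)) (A B : Multiset G) (x : G) :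
    x ∈ sigmaSet Γ (A + B) ↔ ∃ a ∈ sigmaSet Γ A, ∃ b ∈ sigmaSet Γ B, a + b = x := by
  constructor
  · rintro ⟨T, hΓ, hmap, hsum⟩
    obtain ⟨TA, TB, rfl, hA, hB⟩ := map_split Prod.fst T A B hmap
    exact ⟨(TA.map fun p => p.2 p.1).sum, ⟨TA, fun p hp => hΓ p (by simp [hp]), hA, rfl⟩,
      (TB.map fun p => p.2 p.1).sum, ⟨TB, fun p hp => hΓ p (by simp [hp]), hB, rfl⟩,
      by rw [← hsum, Multiset.map_add, Multiset.sum_add]⟩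
  · rintro ⟨a, ⟨TA, hΓA, hA, hsa⟩, b, ⟨TB, hΓB, hB, hsb⟩, rfl⟩
    refine ⟨TA + TB, ?_, by rw [Multiset.map_add, hA, hB], ?_⟩
    · intro p hp
      rcases Multiset.mem_add.1 hp with h | h
      exacts [hΓA p h, hΓB p h]
    · rw [Multiset.map_add, Multiset.sum_add, hsa, hsb]

lemma sigma_gamma {G : Type*} [AddCommGroup G] (Γ : Set (G →+ G))
    (hComp : ∀ γ ∈ Γ, ∀ δ ∈ Γ, γ.comp δ ∈ Γ) {γ : G →+ G} (hγ : γ ∈ Γ)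
    {S : Multiset G} {x : G} (hx : x ∈ sigmaSet Γ S) : γ x ∈ sigmaSet Γ S := by
  obtain ⟨T, hΓ, hmap, hsum⟩ := hx
  refine ⟨T.map (fun p => (p.1, γ.comp p.2)), ?_, ?_, ?_⟩
  · intro p hp
    obtain ⟨q, hq, rfl⟩ := Multiset.mem_map.1 hp
    exact hComp γ hγ q.2 (hΓ q hq)
  · rw [Multiset.map_map]; exact hmap
  · rw [Multiset.map_map, ← hsum]
    simpa using (map_multiset_sum γ (T.map fun p => p.2 p.1)).symm

lemma sigma_singleton {G : Type*} [AddCommGroup G] (Γ : Set (G →+ G)) (g x : G) :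
    x ∈ sigmaSet Γ {g} ↔ ∃ γ ∈ Γ, γ g = x := by
  constructor
  · rintro ⟨T, hΓ, hmap, hsum⟩
    obtain ⟨p, rfl, rfl⟩ := Multiset.map_eq_singleton.1 hmap
    exact ⟨p.2, hΓ p (Multiset.mem_singleton_self p), by simpa using hsum⟩
  · rintro ⟨γ, hγ, rfl⟩
    exact ⟨{(g, γ)}, by simpa using hγ, by simp, by simp⟩

theorem stmt12 {G : Type*} [AddCommGroup G] [Fintype G] (Γ : Set (G →+ G))
    (hAut : ∀ γ ∈ Γ, Function.Bijective ⇑γ)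
    (hId : AddMonoidHom.id G ∈ Γ)
    (hComp : ∀ γ ∈ Γ, ∀ δ ∈ Γ, γ.comp δ ∈ Γ)
    (hInv : ∀ γ ∈ Γ, ∃ δ ∈ Γ, δ.comp γ = AddMonoidHom.id G)
    (S₁ S₂ : Multiset G) (h1 : S₁ ≠ 0) (h2 : S₂ ≠ 0) :
    (∀ T : Multiset G, IsWZS Γ (T + S₁) ↔ IsWZS Γ (T + S₂))
      ↔ sigmaSet Γ S₁ = sigmaSet Γ S₂ := by
  constructor
  · intro h
    ext x
    have key : ∀ S S' : Multiset G, (∀ T : Multiset G, IsWZS Γ (T + S) → IsWZS Γ (T + S')) →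
        x ∈ sigmaSet Γ S → x ∈ sigmaSet Γ S' := by
      intro S S' hss hx
      have hw : IsWZS Γ (({-x} : Multiset G) + S) := by
        rw [wzs_iff_zero_mem, sigma_add]
        exact ⟨-x, (sigma_singleton Γ _ _).2 ⟨AddMonoidHom.id G, hId, rfl⟩, x, hx, by simp⟩
      have hw' := hss _ hw
      rw [wzs_iff_zero_mem, sigma_add] at hw'
      obtain ⟨a, ha, b, hb, hab⟩ := hw'
      obtain ⟨γ, hγ, rfl⟩ := (sigma_singleton Γ _ _).1 ha
      have hbγ : b = γ x := by
        have := hab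
        simp only [map_neg] at this
        linear_combination (norm := abel) this
      obtain ⟨δ, hδ, hδγ⟩ := hInv γ hγ
      have := sigma_gamma Γ hComp hδ (hbγ ▸ hb)
      rwa [show δ (γ x) = x from congrArg (fun f : G →+ G => f x) hδγ] at this
    exact ⟨key S₁ S₂ (fun T => (h T).1), key S₂ S₁ (fun T => (h T).2)⟩
  · intro h T
    rw [wzs_iff_zero_mem, wzs_iff_zero_mem, sigma_add, sigma_add, h]
end

section
/- Let G ≅ C₂^r ⊕ C₄^t with t ≥ 1 and let S be a sequence over G. Then S ∈ ℬ_±(G) if and only if σ_±(S) is a subgroup of 2G. -/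
section Aux
variable {G : Type*} [AddCommGroup G]

lemma sigma_mem_iff (S : Multiset G) (x : G) :
    x ∈ sigmaSet (pmWeights G) S ↔
      ∃ A B : Multiset G, A + B = S ∧ A.sum - B.sum = x := by
  classical
  constructor
  · rintro ⟨T, hmem, hmap, hsum⟩
    set P : G × (G →+ G) → Prop := fun p => p.2 = AddMonoidHom.id G with hP
    refine ⟨(T.filter P).map Prod.fst, (T.filter (fun p => ¬ P p)).map Prod.fst, ?_, ?_⟩
    · rw [← Multiset.map_add, Multiset.filter_add_not, hmap]
    · have h1 : ((T.filter P).map fun p => p.2 p.1) = (T.filter P).map Prod.fst := by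
        apply Multiset.map_congr rfl
        intro p hp
        have := (Multiset.mem_filter.mp hp).2
        rw [this]; rfl
      have h2 : ((T.filter (fun p => ¬ P p)).map fun p => p.2 p.1)
          = (T.filter (fun p => ¬ P p)).map (fun p => -p.1) := by
        apply Multiset.map_congr rfl
        intro p hp
        obtain ⟨hpT, hpn⟩ := Multiset.mem_filter.mp hp
        rcases hmem p hpT with h | h
        · exact absurd h hpn
        · rw [h]; rfl
      have key := hsum
      rw [← Multiset.filter_add_not P T, Multiset.map_add, Multiset.sum_add, h1, h2] at key
      have h3 : ((T.filter (fun p => ¬ P p)).map (fun p => -p.1)).sum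
          = -((T.filter (fun p => ¬ P p)).map Prod.fst).sum := by
        rw [show (fun p : G × (G →+ G) => -p.1) = (Neg.neg ∘ Prod.fst) from rfl,
          ← Multiset.map_map, Multiset.sum_map_neg']
      rw [h3] at key
      rw [← key]; abel
  · rintro ⟨A, B, hAB, hsum⟩
    refine ⟨A.map (fun a => (a, AddMonoidHom.id G)) + B.map (fun b => (b, -(AddMonoidHom.id G))), ?_, ?_, ?_⟩
    · intro p hp
      rw [Multiset.mem_add] at hp
      rcases hp with hp | hp <;> simp only [Multiset.mem_map] at hp <;>
        obtain ⟨a, _, rfl⟩ := hp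
      · left; rfl
      · right; rfl
    · simp [Multiset.map_map, hAB]
    · simp only [Multiset.map_add, Multiset.map_map, Multiset.sum_add]
      simpa [Function.comp_def, Multiset.sum_map_neg', sub_eq_add_neg] using hsum

lemma sigma_mem_iff' (S : Multiset G) (x : G) :
    x ∈ sigmaSet (pmWeights G) S ↔
      ∃ B ≤ S, S.sum - (B.sum + B.sum) = x := by
  classical
  rw [sigma_mem_iff]
  constructor
  · rintro ⟨A, B, hAB, rfl⟩
    refine ⟨B, le_add_self.trans_eq hAB, ?_⟩
    rw [← hAB, Multiset.sum_add]; abel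
  · rintro ⟨B, hB, rfl⟩
    refine ⟨S - B, B, tsub_add_cancel_of_le hB, ?_⟩
    have hs : (S - B).sum + B.sum = S.sum := by
      rw [← Multiset.sum_add, tsub_add_cancel_of_le hB]
    rw [← hs]; abel

lemma combine (tor : ∀ g : G, g + g + g + g = 0) {S A B : Multiset G}
    (hA : A ≤ S) (hB : B ≤ S) :
    ∃ W ≤ S, W.sum + W.sum = (A.sum + A.sum) + (B.sum + B.sum) := by
  classical
  refine ⟨(A ∪ B) - (A ∩ B), (tsub_le_self).trans (Multiset.union_le hA hB), ?_⟩
  have hle : A ∩ B ≤ A ∪ B := Multiset.inter_le_left.trans Multiset.le_union_left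
  have hs1 : ((A ∪ B) - (A ∩ B)).sum + (A ∩ B).sum = (A ∪ B).sum := by
    rw [← Multiset.sum_add, tsub_add_cancel_of_le hle]
  have hs2 : (A ∪ B).sum + (A ∩ B).sum = A.sum + B.sum := by
    rw [← Multiset.sum_add, ← Multiset.sum_add, Multiset.union_add_inter]
  set c := (A ∩ B).sum
  have hW : ((A ∪ B) - (A ∩ B)).sum = A.sum + B.sum - c - c := by
    rw [← hs2, ← hs1]; abel
  have key : ((A ∪ B) - (A ∩ B)).sum + ((A ∪ B) - (A ∩ B)).sum + (c + c + c + c)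
      = (A.sum + A.sum) + (B.sum + B.sum) := by
    rw [hW]; abel
  rw [show c + c + c + c = 0 from tor c, add_zero] at key
  exact key

end Aux

theorem stmt14 {G : Type*} [AddCommGroup G] [Fintype G] (r t : ℕ) (ht : 1 ≤ t)
    (iso : G ≃+ ((Fin r → ZMod 2) × (Fin t → ZMod 4))) (S : Multiset G) :
    IsWZS (pmWeights G) S ↔
      ∃ H : AddSubgroup G, (H : Set G) = sigmaSet (pmWeights G) S ∧
        ∀ x ∈ H, ∃ g : G, x = g + g := by
  have tor : ∀ g : G, g + g + g + g = 0 := by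
    intro g
    apply iso.injective
    rw [map_add, map_add, map_add, map_zero]
    set p := iso g
    refine Prod.ext ?_ ?_ <;> funext <;> simp only [Prod.fst_add, Prod.snd_add,
      Prod.fst_zero, Prod.snd_zero, Pi.add_apply, Pi.zero_apply] <;>
      generalize (p.1 _ : ZMod 2) = a <;> generalize (p.2 _ : ZMod 4) = b
    · revert a; decide
    · revert b; decide
  have hwzs : IsWZS (pmWeights G) S ↔ (0 : G) ∈ sigmaSet (pmWeights G) S := Iff.rfl
  constructor
  · intro h
    have h0 : (0 : G) ∈ sigmaSet (pmWeights G) S := hwzs.mp h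
    obtain ⟨F, hF, hFsum⟩ := (sigma_mem_iff' S 0).mp h0
    have hSsum : S.sum = F.sum + F.sum := by rwa [sub_eq_zero] at hFsum
    have hsq : ∀ x ∈ sigmaSet (pmWeights G) S, ∃ W ≤ S, x = W.sum + W.sum := by
      intro x hx
      obtain ⟨B, hB, rfl⟩ := (sigma_mem_iff' S x).mp hx
      obtain ⟨W, hW, hWs⟩ := combine tor hF hB
      refine ⟨W, hW, ?_⟩
      rw [hSsum, hWs]
      have hb : (B.sum + B.sum) + (B.sum + B.sum) = 0 := by
        rw [← tor B.sum]; abel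
      rw [sub_eq_add_neg, neg_eq_of_add_eq_zero_left hb]
    have hadd : ∀ x ∈ sigmaSet (pmWeights G) S, ∀ y ∈ sigmaSet (pmWeights G) S,
        x + y ∈ sigmaSet (pmWeights G) S := by
      intro x hx y hy
      obtain ⟨W₁, hW₁, rfl⟩ := hsq x hx
      obtain ⟨W₂, hW₂, rfl⟩ := hsq y hy
      obtain ⟨W₃, hW₃, hW₃s⟩ := combine tor hW₁ hW₂
      obtain ⟨W₄, hW₄, hW₄s⟩ := combine tor hF hW₃
      rw [sigma_mem_iff']
      refine ⟨W₄, hW₄, ?_⟩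
      rw [hSsum, hW₄s, ← hW₃s]
      have h1 : F.sum + F.sum - ((F.sum + F.sum) + (W₃.sum + W₃.sum))
          = -(W₃.sum + W₃.sum) := by abel
      have hb : (W₃.sum + W₃.sum) + (W₃.sum + W₃.sum) = 0 := by
        rw [← tor W₃.sum]; abel
      rw [h1, neg_eq_of_add_eq_zero_left hb]
    refine ⟨{ carrier := sigmaSet (pmWeights G) S,
              zero_mem' := h0,
              add_mem' := fun {a b} ha hb => hadd a ha b hb,
              neg_mem' := ?_ }, rfl, ?_⟩
    · intro x hx
      obtain ⟨W, hW, rfl⟩ := hsq x hx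
      have hb : (W.sum + W.sum) + (W.sum + W.sum) = 0 := by rw [← tor W.sum]; abel
      show -(W.sum + W.sum) ∈ sigmaSet (pmWeights G) S
      rw [neg_eq_of_add_eq_zero_left hb]
      exact hx
    · intro x hx
      obtain ⟨W, _, rfl⟩ := hsq x hx
      exact ⟨W.sum, rfl⟩
  · rintro ⟨H, hcar, _⟩
    rw [hwzs, ← hcar]
    exact H.zero_mem
end

section
/- Let G be a finite abelian group. Then the catenary degree of ℬ_±(G) is at most 2 (equivalently, ℬ_±(G) is half-factorial, i.e., its set of distances is empty) if and only if |G| ≤ 2. -/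
section Aux
variable {G : Type*} [AddCommGroup G]

lemma mem_pm {f : G →+ G} (h : f ∈ pmWeights G) (g : G) : f g = g ∨ f g = -g := by
  rcases h with h | h <;> subst h <;> simp

lemma singleton_not_wzs {a : G} (ha : a ≠ 0) : ¬ IsWZS (pmWeights G) {a} := by
  rintro ⟨T, hΓ, hfst, hsum⟩
  have hc : T.card = 1 := by
    have := congrArg Multiset.card hfst
    simpa using this
  obtain ⟨p, rfl⟩ := Multiset.card_eq_one.mp hc
  have hp1 : p.1 = a := by simpa using hfst
  have hs : p.2 p.1 = 0 := by simpa using hsum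
  rcases mem_pm (hΓ p (Multiset.mem_singleton_self p)) p.1 with h | h <;>
    rw [h] at hs <;> subst hp1 <;> simp_all

lemma pair_wzs (a : G) : IsWZS (pmWeights G) (a ::ₘ {a}) := by
  refine ⟨(a, AddMonoidHom.id G) ::ₘ {(a, -(AddMonoidHom.id G))}, ?_, ?_, ?_⟩
  · intro p hp
    rcases Multiset.mem_cons.mp hp with h | h
    · subst h; left; rfl
    · rw [Multiset.mem_singleton.mp h]; right; rfl
  · simp
  · simp

lemma triple_wzs {x y z : G} (h : x + y = z) :
    IsWZS (pmWeights G) (x ::ₘ y ::ₘ {z}) := by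
  refine ⟨(x, AddMonoidHom.id G) ::ₘ (y, AddMonoidHom.id G) ::ₘ
      {(z, -(AddMonoidHom.id G))}, ?_, ?_, ?_⟩
  · intro p hp
    rcases Multiset.mem_cons.mp hp with h | hp
    · subst h; left; rfl
    rcases Multiset.mem_cons.mp hp with h | h
    · subst h; left; rfl
    · rw [Multiset.mem_singleton.mp h]; right; rfl
  · simp
  · simp [← h]

lemma atom_pair {x : G} (hx : x ≠ 0) : IsAtomPM (x ::ₘ {x}) := by
  refine ⟨by simp, pair_wzs x, ?_⟩
  intro A B hA hB hAB
  by_contra hc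
  push_neg at hc
  have hcard : A.card + B.card = 2 := by
    have := congrArg Multiset.card hAB
    simpa using this
  have hA1 : A.card = 1 := by
    have h1 : 1 ≤ A.card := Multiset.card_pos.mpr hc.1
    have h2 : 1 ≤ B.card := Multiset.card_pos.mpr hc.2
    omega
  obtain ⟨a, rfl⟩ := Multiset.card_eq_one.mp hA1
  have ha : a ∈ x ::ₘ ({x} : Multiset G) := by
    rw [← hAB]; exact Multiset.mem_add.mpr (Or.inl (Multiset.mem_singleton_self a))
  have hax : a = x := by
    rcases Multiset.mem_cons.mp ha with h | h
    · exact h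
    · exact Multiset.mem_singleton.mp h
  exact singleton_not_wzs (hax ▸ hx) hA

lemma atom_triple {x y z : G} (hx : x ≠ 0) (hy : y ≠ 0) (hz : z ≠ 0)
    (h : x + y = z) : IsAtomPM (x ::ₘ y ::ₘ {z}) := by
  refine ⟨by simp, triple_wzs h, ?_⟩
  intro A B hA hB hAB
  by_contra hc
  push_neg at hc
  have hcard : A.card + B.card = 3 := by
    have := congrArg Multiset.card hAB
    simpa using this
  have h1 : 1 ≤ A.card := Multiset.card_pos.mpr hc.1
  have h2 : 1 ≤ B.card := Multiset.card_pos.mpr hc.2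
  have key : ∀ a : G, a ∈ x ::ₘ y ::ₘ ({z} : Multiset G) → a ≠ 0 := by
    intro a ha
    rcases Multiset.mem_cons.mp ha with h' | ha
    · exact h' ▸ hx
    rcases Multiset.mem_cons.mp ha with h' | h'
    · exact h' ▸ hy
    · exact (Multiset.mem_singleton.mp h') ▸ hz
  have : A.card = 1 ∨ B.card = 1 := by omega
  rcases this with hA1 | hB1
  · obtain ⟨a, rfl⟩ := Multiset.card_eq_one.mp hA1
    have ha : a ∈ x ::ₘ y ::ₘ ({z} : Multiset G) := by
      rw [← hAB]; exact Multiset.mem_add.mpr (Or.inl (Multiset.mem_singleton_self a))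
    exact singleton_not_wzs (key a ha) hA
  · obtain ⟨a, rfl⟩ := Multiset.card_eq_one.mp hB1
    have ha : a ∈ x ::ₘ y ::ₘ ({z} : Multiset G) := by
      rw [← hAB]; exact Multiset.mem_add.mpr (Or.inr (Multiset.mem_singleton_self a))
    exact singleton_not_wzs (key a ha) hB

-- small group lemmas
lemma wzs_iff_sum_zero (h2 : ∀ g : G, g + g = 0) {S : Multiset G} :
    IsWZS (pmWeights G) S ↔ S.sum = 0 := by
  constructor
  · rintro ⟨T, hΓ, hfst, hsum⟩
    have heq : T.map (fun p => p.2 p.1) = T.map Prod.fst := by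
      refine Multiset.map_congr rfl ?_
      intro p hp
      rcases mem_pm (hΓ p hp) p.1 with h | h
      · exact h
      · rw [h, neg_eq_of_add_eq_zero_left (h2 p.1)]
    rw [heq, hfst] at hsum
    exact hsum
  · intro hs
    refine ⟨S.map (fun g => (g, AddMonoidHom.id G)), ?_, ?_, ?_⟩
    · intro p hp
      obtain ⟨g, _, rfl⟩ := Multiset.mem_map.mp hp
      left; rfl
    · rw [Multiset.map_map]; simp
    · rw [Multiset.map_map]; simpa using hs

lemma unique_nonzero [Fintype G] (hcard : Fintype.card G ≤ 2) {a b : G}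
    (ha : a ≠ 0) (hb : b ≠ 0) : a = b := by
  classical
  by_contra hne
  have hsub : ({0, a, b} : Finset G).card ≤ Fintype.card G := Finset.card_le_univ _
  have h3 : ({0, a, b} : Finset G).card = 3 := by
    rw [Finset.card_insert_of_notMem (by simp [Ne.symm ha, Ne.symm hb]),
      Finset.card_insert_of_notMem (by simp [hne])]
    simp
  omega

lemma atom_invariant [Fintype G] [DecidableEq G] (hcard : Fintype.card G ≤ 2)
    (h2 : ∀ g : G, g + g = 0) {A : Multiset G} (hA : IsAtomPM A) :
    A.card + A.count 0 = 2 := by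
  obtain ⟨hne, hwzs, hmin⟩ := hA
  have hsum : A.sum = 0 := (wzs_iff_sum_zero h2).mp hwzs
  by_cases h0 : (0 : G) ∈ A
  · -- A = {0}
    have hA' : (0 : G) ::ₘ A.erase 0 = A := Multiset.cons_erase h0
    have hwz1 : IsWZS (pmWeights G) {(0 : G)} := (wzs_iff_sum_zero h2).mpr (by simp)
    have hwz2 : IsWZS (pmWeights G) (A.erase 0) := by
      rw [wzs_iff_sum_zero h2]
      have := congrArg Multiset.sum hA'
      rw [Multiset.sum_cons, hsum] at this
      simpa using this
    have := hmin {(0 : G)} (A.erase 0) hwz1 hwz2 (by simpa using hA')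
    rcases this with h | h
    · simp at h
    · rw [← hA', h]
      simp
  · -- A = replicate n a with a ≠ 0
    obtain ⟨a, haA⟩ := Multiset.exists_mem_of_ne_zero hne
    have ha : a ≠ 0 := fun h => h0 (h ▸ haA)
    have hrep : A = Multiset.replicate A.card a := by
      rw [Multiset.eq_replicate]
      refine ⟨rfl, fun b hb => ?_⟩
      exact unique_nonzero hcard (fun h => h0 (h ▸ hb)) ha
    set n := A.card with hn
    have hsumr : n • a = 0 := by
      rw [hrep, Multiset.sum_replicate] at hsum
      exact hsum
    have hodd : ∀ m : ℕ, Odd m → m • a = a := by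
      rintro m ⟨k, rfl⟩
      rw [add_nsmul, one_nsmul, two_mul, add_nsmul, ← smul_add, h2 a, smul_zero, zero_add]
    have hnev : Even n := by
      by_contra hne'
      rw [hodd n (Nat.not_even_iff_odd.mp hne')] at hsumr
      exact ha hsumr
    have hn1 : 1 ≤ n := Multiset.card_pos.mpr hne
    have hn2 : 2 ≤ n := by
      rcases hnev with ⟨k, hk⟩
      omega
    have hne2 : n = 2 := by
      by_contra hgt
      have h4 : 4 ≤ n := by
        rcases hnev with ⟨k, hk⟩
        omega
      have hwzA : IsWZS (pmWeights G) (Multiset.replicate 2 a) := by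
        rw [wzs_iff_sum_zero h2, Multiset.sum_replicate, two_nsmul]
        exact h2 a
      have hwzB : IsWZS (pmWeights G) (Multiset.replicate (n - 2) a) := by
        rw [wzs_iff_sum_zero h2, Multiset.sum_replicate]
        rcases hnev with ⟨k, hk⟩
        have : n - 2 = 2 * (k - 1) := by omega
        rw [this, mul_nsmul, two_nsmul, h2 a]
        simp
      have hadd : Multiset.replicate 2 a + Multiset.replicate (n - 2) a = A := by
        rw [← Multiset.replicate_add]
        rw [hrep]
        congr 1
        omega
      rcases hmin _ _ hwzA hwzB hadd with h | h
      · simpa using congrArg Multiset.card h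
      · have := congrArg Multiset.card h
        simp [Multiset.card_replicate] at this
        omega
    have hcount : A.count 0 = 0 := Multiset.count_eq_zero_of_notMem h0
    omega

lemma factorization_invariant [Fintype G] [DecidableEq G] (hcard : Fintype.card G ≤ 2)
    (h2 : ∀ g : G, g + g = 0) (l : List (Multiset G)) (hl : ∀ A ∈ l, IsAtomPM A) :
    2 * l.length = l.sum.card + l.sum.count 0 := by
  induction l with
  | nil => simp
  | cons A l ih =>
    have hA := hl A List.mem_cons_self
    have hl' : ∀ B ∈ l, IsAtomPM B := fun B hB => hl B (List.mem_cons_of_mem A hB)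
    have hinv := atom_invariant hcard h2 hA
    have := ih hl'
    simp only [List.sum_cons, List.length_cons, Multiset.card_add, Multiset.count_add]
    omega

lemma two_torsion [Fintype G] (hcard : Fintype.card G ≤ 2) (g : G) : g + g = 0 := by
  have h1 : 0 < Fintype.card G := Fintype.card_pos
  rcases Nat.lt_or_ge (Fintype.card G) 2 with h | h
  · have hone : Fintype.card G ≤ 1 := by omega
    have : Subsingleton G := Fintype.card_le_one_iff_subsingleton.mp hone
    rw [Subsingleton.elim g 0]; simp
  · have hc2 : Fintype.card G = 2 := le_antisymm hcard h
    have hz : Fintype.card G • g = 0 := card_nsmul_eq_zero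
    rw [hc2, two_nsmul] at hz
    exact hz

end Aux

theorem stmt15 {G : Type*} [AddCommGroup G] [Fintype G] :
    (∀ l₁ l₂ : List (Multiset G), (∀ A ∈ l₁, IsAtomPM A) → (∀ A ∈ l₂, IsAtomPM A) →
      l₁.sum = l₂.sum → l₁.length = l₂.length) ↔ Fintype.card G ≤ 2 := by
  constructor
  · intro h
    by_contra hc
    push_neg at hc
    -- find x y with x ≠ 0, y ≠ 0, x + y ≠ 0
    have hnt : Nontrivial G := Fintype.one_lt_card_iff_nontrivial.mp (by omega)
    obtain ⟨x, hx⟩ := exists_ne (0 : G)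
    obtain ⟨y, hy, hxy⟩ : ∃ y : G, y ≠ 0 ∧ x + y ≠ 0 := by
      by_cases h2x : x + x = 0
      · by_contra hcon
        push_neg at hcon
        have hall : ∀ y : G, y = 0 ∨ y = x := by
          intro y
          by_cases hy0 : y = 0
          · exact Or.inl hy0
          · right
            have hyx : x + y = 0 := hcon y hy0
            rw [eq_neg_of_add_eq_zero_right hyx, neg_eq_of_add_eq_zero_left h2x]
        classical
        have hsub : (Finset.univ : Finset G) ⊆ {0, x} := by
          intro y _
          rcases hall y with h' | h' <;> simp [h']
        have := Finset.card_le_card hsub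
        have hle : ({0, x} : Finset G).card ≤ 2 := Finset.card_insert_le _ _ |>.trans (by simp)
        simp [Finset.card_univ] at this
        omega
      · exact ⟨x, hx, h2x⟩
    set z := x + y with hz
    have hA : IsAtomPM (x ::ₘ y ::ₘ ({z} : Multiset G)) := atom_triple hx hy hxy rfl
    have hpx : IsAtomPM (x ::ₘ ({x} : Multiset G)) := atom_pair hx
    have hpy : IsAtomPM (y ::ₘ ({y} : Multiset G)) := atom_pair hy
    have hpz : IsAtomPM (z ::ₘ ({z} : Multiset G)) := atom_pair hxy
    have := h [x ::ₘ y ::ₘ {z}, x ::ₘ y ::ₘ {z}]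
      [x ::ₘ {x}, y ::ₘ {y}, z ::ₘ {z}]
      (by
        intro A hA'
        simp only [List.mem_cons, List.not_mem_nil, or_false] at hA'
        rcases hA' with rfl | rfl <;> exact hA)
      (by
        intro A hA'
        simp only [List.mem_cons, List.not_mem_nil, or_false] at hA'
        rcases hA' with rfl | rfl | rfl
        · exact hpx
        · exact hpy
        · exact hpz)
      (by
        show (x ::ₘ y ::ₘ {z}) + ((x ::ₘ y ::ₘ {z}) + 0) =
          (x ::ₘ {x}) + ((y ::ₘ {y}) + ((z ::ₘ {z}) + 0))
        simp only [add_zero]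
        have e1 : ∀ a : G, ∀ s : Multiset G, a ::ₘ s = {a} + s := fun a s => rfl
        rw [e1 x (y ::ₘ {z}), e1 y {z}, e1 x {x}, e1 y {y}, e1 z {z}]
        abel)
    simp at this
  · intro hcard l₁ l₂ h₁ h₂ hsum
    classical
    have h2 := two_torsion hcard
    have e1 := factorization_invariant hcard h2 l₁ h₁
    have e2 := factorization_invariant hcard h2 l₂ h₂
    rw [hsum] at e1
    omega
end

section
/- Let G be cyclic of prime order p ≥ 3 and let S be a sequence over G∖{0} of length |S| ≥ p−1. Then σ_±(S) = G; in particular S ∈ ℬ_±(G). -/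
open Pointwise


lemma sigma_zero_s17 {G : Type*} [AddCommGroup G] (Γ : Set (G →+ G)) :
    sigmaSet Γ (0 : Multiset G) = {0} := by
  ext x
  constructor
  · rintro ⟨T, _, hT, hsum⟩
    rw [Multiset.map_eq_zero] at hT
    simp [hT] at hsum
    simp [← hsum]
  · rintro rfl
    exact ⟨0, by simp, by simp, by simp⟩

lemma sigma_cons {G : Type*} [AddCommGroup G] (g : G) (S : Multiset G) :
    sigmaSet (pmWeights G) (g ::ₘ S) =
      ({g, -g} : Set G) + sigmaSet (pmWeights G) S := by
  classical
  ext x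
  constructor
  · rintro ⟨T, hΓ, hT, rfl⟩
    have hg : g ∈ T.map Prod.fst := by rw [hT]; exact Multiset.mem_cons_self _ _
    obtain ⟨q, hqT, hq1⟩ := Multiset.mem_map.1 hg
    have hTe : T = q ::ₘ T.erase q := (Multiset.cons_erase hqT).symm
    have hS : (T.erase q).map Prod.fst = S := by
      have := congrArg (Multiset.map Prod.fst) hTe
      rw [hT, Multiset.map_cons, hq1] at this
      exact (Multiset.cons_inj_right g).1 this.symm
    refine ⟨q.2 q.1, ?_, ((T.erase q).map fun p => p.2 p.1).sum, ?_, ?_⟩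
    · have hw := hΓ q hqT
      rcases (Set.mem_insert_iff.1 hw) with h | h
      · rw [h, hq1]; exact Set.mem_insert _ _
      · rw [Set.mem_singleton_iff] at h
        rw [h, hq1]; right; simp
    · exact ⟨T.erase q, fun p hp => hΓ p (Multiset.mem_of_mem_erase hp), hS, rfl⟩
    · conv_rhs => rw [hTe]
      simp
  · rintro ⟨a, ha, y, ⟨T, hΓ, hT, rfl⟩, rfl⟩
    rcases (Set.mem_insert_iff.1 ha) with rfl | ha
    · exact ⟨(a, AddMonoidHom.id G) ::ₘ T, by
        rintro p hp
        rcases Multiset.mem_cons.1 hp with rfl | hp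
        · exact Set.mem_insert _ _
        · exact hΓ p hp, by simp [hT], by simp⟩
    · rw [Set.mem_singleton_iff] at ha
      subst ha
      exact ⟨(g, -(AddMonoidHom.id G)) ::ₘ T, by
        rintro p hp
        rcases Multiset.mem_cons.1 hp with rfl | hp
        · exact Set.mem_insert_of_mem _ rfl
        · exact hΓ p hp, by simp [hT], by simp⟩

lemma minOrder_ge {G : Type*} [AddCommGroup G] [Fintype G]
    (hp : (Fintype.card G).Prime) :
    (Fintype.card G : ℕ∞) ≤ AddMonoid.minOrder G := by
  rw [AddMonoid.le_minOrder]
  intro a ha _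
  have hdvd : addOrderOf a ∣ Fintype.card G := addOrderOf_dvd_card
  rcases (hp.eq_one_or_self_of_dvd _ hdvd) with h | h
  · exact absurd (AddMonoid.addOrderOf_eq_one_iff.1 h) ha
  · rw [h]

lemma key {G : Type*} [AddCommGroup G] [Fintype G] [DecidableEq G]
    (hp : (Fintype.card G).Prime) (h3 : 3 ≤ Fintype.card G)
    (S : Multiset G) (hS0 : ∀ x ∈ S, x ≠ (0 : G)) :
    ∃ F : Finset G, (↑F : Set G) = sigmaSet (pmWeights G) S ∧
      min (Fintype.card G) (Multiset.card S + 1) ≤ F.card := by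
  induction S using Multiset.induction_on with
  | empty =>
      refine ⟨{0}, by simp [sigma_zero_s17], ?_⟩
      simp
  | cons g S ih =>
      obtain ⟨F, hF, hcard⟩ := ih (fun x hx => hS0 x (Multiset.mem_cons_of_mem hx))
      have hg : g ≠ 0 := hS0 g (Multiset.mem_cons_self g S)
      refine ⟨({g, -g} : Finset G) + F, ?_, ?_⟩
      · rw [Finset.coe_add, hF, sigma_cons]
        congr 1
        simp
      · have hFne : F.Nonempty := by
          rw [← Finset.card_pos]
          have : 0 < min (Fintype.card G) (Multiset.card S + 1) := by
            omega
          omega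
      -- card {g,-g} = 2
        have h2 : ({g, -g} : Finset G).card = 2 := by
          rw [Finset.card_insert_of_notMem, Finset.card_singleton]
          simp only [Finset.mem_singleton]
          intro h
          have h2g : 2 • g = 0 := by
            rw [two_nsmul]
            nth_rewrite 1 [h]
            exact neg_add_cancel g
          have : addOrderOf g ∣ 2 := addOrderOf_dvd_of_nsmul_eq_zero h2g
          have hdvd : addOrderOf g ∣ Fintype.card G := addOrderOf_dvd_card
          rcases (hp.eq_one_or_self_of_dvd _ hdvd) with h1 | hP
          · exact hg (AddMonoid.addOrderOf_eq_one_iff.1 h1)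
          · rw [hP] at this
            have := Nat.le_of_dvd (by norm_num) this
            omega
        have hCD := cauchy_davenport_minOrder_add (Finset.insert_nonempty g {-g}) hFne
        have hle1 : ((min (Fintype.card G) (({g,-g} : Finset G).card + F.card - 1) : ℕ) : ℕ∞)
            ≤ min (AddMonoid.minOrder G) ((({g,-g} : Finset G).card + F.card - 1 : ℕ) : ℕ∞) := by
          refine le_min ?_ ?_
          · exact le_trans (by exact_mod_cast min_le_left _ _) (minOrder_ge hp)
          · exact_mod_cast min_le_right _ _
        have hfin : min (Fintype.card G) (({g,-g} : Finset G).card + F.card - 1)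
            ≤ (({g,-g} : Finset G) + F).card := by
          exact_mod_cast le_trans hle1 hCD
        rw [h2] at hfin
        rw [Multiset.card_cons]
        rcases min_cases (Fintype.card G) (Multiset.card S + 1) with ⟨he, hle⟩ | ⟨he, hle⟩ <;>
          rw [he] at hcard <;> omega

theorem stmt17 {G : Type*} [AddCommGroup G] [Fintype G]
    (hp : (Fintype.card G).Prime) (h3 : 3 ≤ Fintype.card G)
    (S : Multiset G) (hS0 : ∀ x ∈ S, x ≠ (0 : G))
    (hlen : Fintype.card G - 1 ≤ Multiset.card S) :
    sigmaSet (pmWeights G) S = Set.univ ∧ IsWZS (pmWeights G) S := by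
  classical
  obtain ⟨F, hF, hcard⟩ := key hp h3 S hS0
  have hple : Fintype.card G ≤ F.card := by omega
  have : F = Finset.univ := Finset.eq_univ_of_card F (le_antisymm (Finset.card_le_univ F) hple)
  have huniv : sigmaSet (pmWeights G) S = Set.univ := by
    rw [← hF, this, Finset.coe_univ]
  refine ⟨huniv, ?_⟩
  have : (0 : G) ∈ sigmaSet (pmWeights G) S := by rw [huniv]; trivial
  exact this
end
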